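/- arXiv:1309.5082 — 6 statements merged into one kernel-verified Lean document; each statement's English description precedes it below -/
import Mathlib

section
/- Let R = k[x_0,…,x_n] be a polynomial ring over a field k and let I ⊆ R be a monomial ideal having a unique maximal associated prime (i.e., the set of associated primes of I has a greatest element under inclusion). Then for every positive integer m, the m-th symbolic power of I equals the ordinary power: I^{(m)} = I^m. -/
open MvPolynomial Pointwise

noncomputable section

/-- The contraction to `R` of the extension of `I ^ m` to the localization of `R` at the
prime ideal `P`, i.e. `R ∩ I^m R_P`. -/
def contractedPower {R : Type*} [CommRing R] (I : Ideal R) (m : ℕ)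
    (P : Ideal R) (hP : P.IsPrime) : Ideal R :=
  letI := hP
  (Ideal.map (algebraMap R (Localization.AtPrime P)) (I ^ m)).comap
    (algebraMap R (Localization.AtPrime P))

/-- `Q_{⊆ P} = R ∩ I R_P`, the contraction to `R` of the extension of `I` to `R_P`. -/
def Qsub {R : Type*} [CommRing R] (I P : Ideal R) (hP : P.IsPrime) : Ideal R :=
  letI := hP
  (Ideal.map (algebraMap R (Localization.AtPrime P)) I).comap
    (algebraMap R (Localization.AtPrime P))

/-- The `m`-th symbolic power `I^{(m)} = ⋂_{P ∈ Ass(I)} (R ∩ I^m R_P)`. -/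
def symbolicPower {R : Type*} [CommRing R] (I : Ideal R) (m : ℕ) : Ideal R :=
  ⨅ P : {P : Ideal R // P ∈ associatedPrimes R (R ⧸ I)},
    contractedPower I m P.1 P.2.isPrime

/-- The set of associated primes of `I` that are maximal with respect to inclusion. -/
def maxAss {R : Type*} [CommRing R] (I : Ideal R) : Set (Ideal R) :=
  {P | P ∈ associatedPrimes R (R ⧸ I) ∧
    ∀ P' ∈ associatedPrimes R (R ⧸ I), P ≤ P' → P = P'}

/-- A monomial ideal: an ideal generated by monomials. -/
def IsMonomialIdeal {k : Type*} [Field k] {n : ℕ}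
    (I : Ideal (MvPolynomial (Fin (n + 1)) k)) : Prop :=
  ∃ S : Set (Fin (n + 1) →₀ ℕ),
    I = Ideal.span ((fun a => (monomial a (1 : k) : MvPolynomial (Fin (n + 1)) k)) '' S)

/-- A square-free monomial ideal: an ideal generated by square-free monomials. -/
def IsSquarefreeMonomialIdeal {k : Type*} [Field k] {n : ℕ}
    (I : Ideal (MvPolynomial (Fin (n + 1)) k)) : Prop :=
  ∃ S : Set (Fin (n + 1) →₀ ℕ), (∀ a ∈ S, ∀ i, a i ≤ 1) ∧
    I = Ideal.span ((fun a => (monomial a (1 : k) : MvPolynomial (Fin (n + 1)) k)) '' S)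

/-- The height of a prime ideal. -/
def primeHeight {R : Type*} [CommRing R] (P : Ideal R) (hP : P.IsPrime) : ℕ∞ :=
  Order.height (⟨P, hP⟩ : PrimeSpectrum R)

/-- `e` is the big-height of `I`: the maximum of the heights of the associated primes of `I`. -/
def IsBigHeight {R : Type*} [CommRing R] (I : Ideal R) (e : ℕ) : Prop :=
  (∀ P, ∀ h : P ∈ associatedPrimes R (R ⧸ I), primeHeight P h.isPrime ≤ (e : ℕ∞)) ∧
    ∃ P, ∃ h : P ∈ associatedPrimes R (R ⧸ I), primeHeight P h.isPrime = (e : ℕ∞)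

/-- The irrelevant maximal ideal `𝔪 = (x_0, …, x_n)`. -/
def mId (k : Type*) [Field k] (n : ℕ) : Ideal (MvPolynomial (Fin (n + 1)) k) :=
  Ideal.span (Set.range X)

/-- The exponent vector of a monomial, viewed as a point of `ℝ^{n+1}`. -/
def expVec {n : ℕ} (a : Fin (n + 1) →₀ ℕ) : Fin (n + 1) → ℝ := fun i => (a i : ℝ)

/-- `L(J)`: the set of exponent vectors of the monomials lying in `J`. -/
def latticePoints {k : Type*} [Field k] {n : ℕ}
    (J : Ideal (MvPolynomial (Fin (n + 1)) k)) : Set (Fin (n + 1) → ℝ) :=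
  {v | ∃ a : Fin (n + 1) →₀ ℕ, monomial a (1 : k) ∈ J ∧ v = expVec a}

/-- The exponent vectors of the minimal monomial generators of a monomial ideal. -/
def minGens {k : Type*} [Field k] {n : ℕ}
    (J : Ideal (MvPolynomial (Fin (n + 1)) k)) : Set (Fin (n + 1) →₀ ℕ) :=
  {a | monomial a (1 : k) ∈ J ∧
    ∀ b : Fin (n + 1) →₀ ℕ, monomial b (1 : k) ∈ J → b ≤ a → b = a}

/-- The symbolic polyhedron `𝒬 = ⋂_{P ∈ maxAss(I)} conv(L(Q_{⊆P}))`. -/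
def symbolicPolyhedron {k : Type*} [Field k] {n : ℕ}
    (I : Ideal (MvPolynomial (Fin (n + 1)) k)) : Set (Fin (n + 1) → ℝ) :=
  ⋂ P : {P : Ideal (MvPolynomial (Fin (n + 1)) k) // P ∈ maxAss I},
    convexHull ℝ (latticePoints (Qsub I P.1 P.2.1.isPrime))

/-- `α(J)`: the least degree of a nonzero (homogeneous) element of `J`. -/
def alphaI {k : Type*} [Field k] {n : ℕ}
    (J : Ideal (MvPolynomial (Fin (n + 1)) k)) : ℕ :=
  sInf {d | ∃ f ∈ J, f ≠ 0 ∧ MvPolynomial.IsHomogeneous f d}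

/-- `β(J)`: the largest degree of a minimal generator of the monomial ideal `J`. -/
def betaI {k : Type*} [Field k] {n : ℕ}
    (J : Ideal (MvPolynomial (Fin (n + 1)) k)) : ℕ :=
  sSup {d | ∃ a ∈ minGens J, ∑ i, a i = d}

/-- `α(𝒫) = inf { a_0 + ⋯ + a_n : a ∈ 𝒫 }` for a subset `𝒫 ⊆ ℝ^{n+1}`. -/
def alphaSet {n : ℕ} (P : Set (Fin (n + 1) → ℝ)) : ℝ :=
  sInf ((fun v => ∑ i, v i) '' P)

/-- The set of all conical (nonnegative) combinations of elements of `S`. -/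
def conicalHull {E : Type*} [AddCommMonoid E] [Module ℝ E] (S : Set E) : Set E :=
  {x | ∃ (t : Finset E) (c : E → ℝ), ↑t ⊆ S ∧ (∀ y, 0 ≤ c y) ∧ x = ∑ y ∈ t, c y • y}

/-- The staircase of a monomial ideal `J`. -/
def stairs {k : Type*} [Field k] {n : ℕ}
    (J : Ideal (MvPolynomial (Fin (n + 1)) k)) : Set (Fin (n + 1) → ℝ) :=
  {v | (∀ i, 0 ≤ v i) ∧
    ∃ a : Fin (n + 1) →₀ ℕ, monomial a (1 : k) ∈ J ∧ ∀ i, (a i : ℝ) ≤ v i}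

end


namespace SymbAux

/-- Uniqueness of base-`N` representations. -/
lemma baseN_unique : ∀ (t : ℕ) (N : ℕ) (d e : Fin t → ℕ), (∀ i, d i < N) → (∀ i, e i < N) →
    (∑ i, d i * N ^ (i : ℕ)) = (∑ i, e i * N ^ (i : ℕ)) → d = e := by
  intro t
  induction t with
  | zero => intro N d e _ _ _; funext i; exact i.elim0
  | succ t ih =>
    intro N d e hd he h
    have e1 : ∀ f : Fin (t + 1) → ℕ, (∑ i, f i * N ^ (i : ℕ))
        = f 0 + N * ∑ i : Fin t, f i.succ * N ^ (i : ℕ) := by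
      intro f
      rw [Fin.sum_univ_succ, Finset.mul_sum]
      simp only [Fin.val_zero, pow_zero, mul_one, Fin.val_succ, pow_succ]
      congr 1
      refine Finset.sum_congr rfl fun i _ => ?_
      ring
    rw [e1 d, e1 e] at h
    have hN : 0 < N := Nat.pos_of_ne_zero (by rintro rfl; exact absurd (hd 0) (by simp))
    have h0 : d 0 = e 0 := by
      have h1 := congrArg (· % N) h
      simpa [Nat.add_mul_mod_self_left, Nat.mod_eq_of_lt (hd 0), Nat.mod_eq_of_lt (he 0)] using h1
    have htail : (∑ i : Fin t, d i.succ * N ^ (i : ℕ)) = ∑ i : Fin t, e i.succ * N ^ (i : ℕ) := by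
      rw [h0] at h
      have h2 := Nat.add_left_cancel h
      exact Nat.eq_of_mul_eq_mul_left hN h2
    have := ih N (fun i => d i.succ) (fun i => e i.succ) (fun i => hd _) (fun i => he _) htail
    funext i
    refine Fin.cases h0 (fun j => ?_) i
    exact congrFun this j

/-- Key combinatorial pair-selection lemma. -/
lemma key_pair {n : ℕ} (sup B : Finset (Fin (n + 1) →₀ ℕ)) (T : Finset (Fin (n + 1)))
    (hB : B.Nonempty)
    (hA : (sup.filter fun ν => (∑ j ∈ T, ν j) = 0).Nonempty) :
    ∃ σ ∈ sup.filter (fun ν => (∑ j ∈ T, ν j) = 0), ∃ μs ∈ B,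
      ∀ ν ∈ sup, ∀ μ ∈ B, ν + μ = σ + μs → ν = σ ∧ μ = μs := by
  classical
  set N : ℕ := 1 + sup.sup (fun ν => Finset.univ.sup fun j => ν j) with hNdef
  have hN : ∀ ν ∈ sup, ∀ j, ν j < N := by
    intro ν hν j
    have : ν j ≤ sup.sup (fun ν => Finset.univ.sup fun j => ν j) :=
      le_trans (Finset.le_sup (f := fun j => ν j) (Finset.mem_univ j))
        (Finset.le_sup (f := fun ν => Finset.univ.sup fun j => ν j) hν)
    omega
  set Ψ : (Fin (n + 1) →₀ ℕ) → ℕ := fun ν => ∑ j : Fin (n + 1), ν j * N ^ (j : ℕ) with hΨdef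
  have Ψadd : ∀ a b, Ψ (a + b) = Ψ a + Ψ b := by
    intro a b
    simp only [hΨdef, Finsupp.add_apply, add_mul, Finset.sum_add_distrib]
  set M : ℕ := 1 + sup.sup Ψ with hMdef
  have hM : ∀ ν ∈ sup, Ψ ν < M := by
    intro ν hν
    have := Finset.le_sup (f := Ψ) hν
    omega
  set w : (Fin (n + 1) →₀ ℕ) → ℕ := fun ν => ∑ j ∈ T, ν j with hwdef
  have wadd : ∀ a b, w (a + b) = w a + w b := by
    intro a b
    simp only [hwdef, Finsupp.add_apply, Finset.sum_add_distrib]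
  set Φ : (Fin (n + 1) →₀ ℕ) → ℕ := fun ν => w ν * M + Ψ ν with hΦdef
  have Φadd : ∀ a b, Φ (a + b) = Φ a + Φ b := by
    intro a b; simp only [hΦdef, wadd, Ψadd, add_mul]; ring
  obtain ⟨σ, hσA, hσmin⟩ := Finset.exists_min_image _ Φ hA
  obtain ⟨μs, hμsB, hμsmin⟩ := Finset.exists_min_image _ Φ hB
  refine ⟨σ, hσA, μs, hμsB, ?_⟩
  intro ν hν μ hμ heq
  have hσsup : σ ∈ sup := (Finset.mem_filter.mp hσA).1
  have hσw : w σ = 0 := (Finset.mem_filter.mp hσA).2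
  have e1 : Φ ν + Φ μ = Φ σ + Φ μs := by rw [← Φadd, ← Φadd, heq]
  have e2 : Φ μs ≤ Φ μ := hμsmin μ hμ
  have e3 : Φ ν ≤ Φ σ := by omega
  have hΦσ : Φ σ = Ψ σ := by simp [hΦdef, hσw]
  have hΨσM : Ψ σ < M := hM σ hσsup
  have hwv : w ν = 0 := by
    by_contra hw
    have : M ≤ w ν * M := Nat.le_mul_of_pos_left M (Nat.pos_of_ne_zero hw)
    have : M ≤ Φ ν := le_trans this (Nat.le_add_right _ _)
    omega
  have hνA : ν ∈ sup.filter fun ν => (∑ j ∈ T, ν j) = 0 :=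
    Finset.mem_filter.mpr ⟨hν, hwv⟩
  have e4 : Φ σ ≤ Φ ν := hσmin ν hνA
  have e5 : Φ ν = Φ σ := le_antisymm e3 e4
  have e6 : Ψ ν = Ψ σ := by
    have : Φ ν = Ψ ν := by simp [hΦdef, hwv]
    omega
  have hνσ : ν = σ := by
    have hfun : (fun i : Fin (n + 1) => ν i) = fun i : Fin (n + 1) => σ i :=
      baseN_unique (n + 1) N _ _ (fun i => hN ν hν i) (fun i => hN σ hσsup i) e6
    ext j
    exact congrFun hfun j
  refine ⟨hνσ, ?_⟩
  rw [hνσ] at heq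
  exact add_left_cancel heq

end SymbAux

section MonIdeal

variable {k : Type*} [Field k] {n : ℕ}

lemma monomial_prod {ι : Type*} (t : Finset ι) (g : ι → (Fin (n + 1) →₀ ℕ)) :
    (∏ i ∈ t, (monomial (g i) (1 : k) : MvPolynomial (Fin (n + 1)) k))
      = monomial (∑ i ∈ t, g i) 1 := by
  classical
  induction t using Finset.cons_induction with
  | empty => simp
  | cons a s ha ih => rw [Finset.prod_cons, Finset.sum_cons, ih, monomial_mul, one_mul]

lemma span_monomial_pow (S : Set (Fin (n + 1) →₀ ℕ)) (m : ℕ) :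
    (Ideal.span ((fun a => (monomial a (1 : k) : MvPolynomial (Fin (n + 1)) k)) '' S)) ^ m
      = Ideal.span ((fun a => (monomial a (1 : k) : MvPolynomial (Fin (n + 1)) k)) ''
          {a | ∃ b : Fin m → (Fin (n + 1) →₀ ℕ), (∀ i, b i ∈ S) ∧ a = ∑ i, b i}) := by
  induction m with
  | zero =>
    have hset : {a : Fin (n + 1) →₀ ℕ | ∃ b : Fin 0 → (Fin (n + 1) →₀ ℕ),
        (∀ i, b i ∈ S) ∧ a = ∑ i, b i} = {0} := by
      ext a
      constructor
      · rintro ⟨b, -, rfl⟩; simp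
      · rintro rfl; exact ⟨fun i => i.elim0, fun i => i.elim0, by simp⟩
    rw [pow_zero, hset]
    have : ((fun a => (monomial a (1 : k) : MvPolynomial (Fin (n + 1)) k)) '' {0})
        = {1} := by
      ext x; simp [MvPolynomial.monomial_zero']
    rw [this, Ideal.span_singleton_one, Ideal.one_eq_top]
  | succ m ih =>
    rw [pow_succ, ih, Ideal.span_mul_span']
    congr 1
    ext x
    constructor
    · rintro ⟨-, ⟨a, ⟨b, hb, rfl⟩, rfl⟩, -, ⟨c, hc, rfl⟩, rfl⟩
      refine ⟨(∑ i, b i) + c, ⟨Fin.lastCases c b, ?_, ?_⟩, ?_⟩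
      · intro i
        refine Fin.lastCases ?_ (fun j => ?_) i
        · simpa using hc
        · simpa using hb j
      · rw [Fin.sum_univ_castSucc]
        simp
      · simp [monomial_mul]
    · rintro ⟨a, ⟨b, hb, rfl⟩, rfl⟩
      refine ⟨monomial (∑ i : Fin m, b i.castSucc) 1,
        ⟨∑ i : Fin m, b i.castSucc, ⟨fun i => b i.castSucc, fun i => hb _, rfl⟩, rfl⟩,
        monomial (b (Fin.last m)) 1, ⟨b (Fin.last m), hb _, rfl⟩, ?_⟩
      show (monomial (∑ i : Fin m, b i.castSucc) (1:k)) * monomial (b (Fin.last m)) 1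
          = monomial (∑ i : Fin (m+1), b i) 1
      rw [monomial_mul, one_mul, ← Fin.sum_univ_castSucc]

lemma mem_pow_iff (S : Set (Fin (n + 1) →₀ ℕ)) (m : ℕ) (f : MvPolynomial (Fin (n + 1)) k) :
    f ∈ (Ideal.span ((fun a => (monomial a (1 : k) : MvPolynomial (Fin (n + 1)) k)) '' S)) ^ m ↔
      ∀ μ ∈ f.support, ∃ b : Fin m → (Fin (n + 1) →₀ ℕ),
        (∀ i, (monomial (b i) (1 : k) : MvPolynomial (Fin (n + 1)) k) ∈
          Ideal.span ((fun a => (monomial a (1 : k) : MvPolynomial (Fin (n + 1)) k)) '' S)) ∧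
        (∑ i, b i) ≤ μ := by
  constructor
  · intro h μ hμ
    rw [span_monomial_pow] at h
    obtain ⟨a, ⟨b, hb, rfl⟩, ha⟩ := mem_ideal_span_monomial_image.mp h μ hμ
    exact ⟨b, fun i => Ideal.subset_span ⟨b i, hb i, rfl⟩, ha⟩
  · intro h
    rw [MvPolynomial.as_sum f]
    apply Ideal.sum_mem
    intro μ hμ
    obtain ⟨b, hbI, hble⟩ := h μ hμ
    have key : (monomial μ (f.coeff μ) : MvPolynomial (Fin (n + 1)) k)
        = monomial (μ - ∑ i, b i) (f.coeff μ) * ∏ i, monomial (b i) (1 : k) := by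
      rw [monomial_prod, monomial_mul, mul_one, tsub_add_cancel_of_le hble]
    rw [key]
    apply Ideal.mul_mem_left
    have hprod : (Ideal.span ((fun a => (monomial a (1 : k) :
          MvPolynomial (Fin (n + 1)) k)) '' S)) ^ m
        = ∏ _i : Fin m, Ideal.span ((fun a => (monomial a (1 : k) :
          MvPolynomial (Fin (n + 1)) k)) '' S) := by
      rw [Finset.prod_const, Finset.card_univ, Fintype.card_fin]
    rw [hprod]
    exact Ideal.prod_mem_prod fun i _ => hbI i

end MonIdeal

section Reg

variable {k : Type*} [Field k] {n : ℕ}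

/-- If `P` is the greatest associated prime of `I`, then elements outside `P` are
nonzerodivisors modulo `I`. -/
lemma reg {I P : Ideal (MvPolynomial (Fin (n + 1)) k)}
    (hPmax : ∀ P' ∈ associatedPrimes (MvPolynomial (Fin (n + 1)) k)
      (MvPolynomial (Fin (n + 1)) k ⧸ I), P' ≤ P)
    {s f : MvPolynomial (Fin (n + 1)) k} (hs : s ∉ P) (h : s * f ∈ I) : f ∈ I := by
  by_contra hf
  have hx : (Ideal.Quotient.mk I f) ≠ 0 := fun h0 => hf (Ideal.Quotient.eq_zero_iff_mem.mp h0)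
  obtain ⟨P', hP', hle⟩ := exists_le_isAssociatedPrime_of_isNoetherianRing
      (MvPolynomial (Fin (n + 1)) k) (Ideal.Quotient.mk I f) hx
  apply hs
  apply hPmax P' hP'
  apply hle
  rw [Submodule.mem_colon_singleton, Submodule.mem_bot]
  show s • (Ideal.Quotient.mk I f) = 0
  have hsmul : s • (Ideal.Quotient.mk I f) = Ideal.Quotient.mk I (s * f) := rfl
  rw [hsmul, Ideal.Quotient.eq_zero_iff_mem]
  exact h

/-- Zeroing out the exponents of variables not in `P` keeps a monomial in `I`. -/
lemma filter_mem {I P : Ideal (MvPolynomial (Fin (n + 1)) k)}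
    [DecidablePred fun j : Fin (n + 1) => (X j : MvPolynomial (Fin (n + 1)) k) ∈ P]
    (hP : P.IsPrime)
    (hPmax : ∀ P' ∈ associatedPrimes (MvPolynomial (Fin (n + 1)) k)
      (MvPolynomial (Fin (n + 1)) k ⧸ I), P' ≤ P)
    {μ : Fin (n + 1) →₀ ℕ} (hμ : (monomial μ (1 : k) : MvPolynomial (Fin (n + 1)) k) ∈ I) :
    (monomial (μ.filter fun j => X j ∈ P) (1 : k) : MvPolynomial (Fin (n + 1)) k) ∈ I := by
  classical
  set ρ : Fin (n + 1) →₀ ℕ := μ.filter (fun j => ¬ X j ∈ P) with hρ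
  have hsplit : (μ.filter fun j => X j ∈ P) + ρ = μ := Finsupp.filter_pos_add_filter_neg μ _
  have hmul : (monomial ρ (1 : k) : MvPolynomial (Fin (n + 1)) k)
      * monomial (μ.filter fun j => X j ∈ P) 1 = monomial μ 1 := by
    rw [monomial_mul, one_mul]
    have h2 : ρ + Finsupp.filter (fun j => X j ∈ P) μ = μ := by
      exact (add_comm _ _).trans hsplit
    rw [h2]
  have hρP : (monomial ρ (1 : k) : MvPolynomial (Fin (n + 1)) k) ∉ P := by
    intro hmem
    rw [← prod_X_pow_eq_monomial] at hmem
    haveI := hP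
    obtain ⟨j, hj, hjP⟩ := Ideal.IsPrime.prod_mem_iff.mp hmem
    have hj' : ρ j ≠ 0 := Finsupp.mem_support_iff.mp hj
    have hjpos : 0 < ρ j := Nat.pos_of_ne_zero hj'
    have hXj : X j ∈ P := (hP.pow_mem_iff_mem _ hjpos).mp hjP
    rw [hρ, Finsupp.filter_apply] at hj'
    by_cases hc : X j ∈ P
    · simp [hc] at hj'
    · exact hc hXj
  exact reg hPmax hρP (by rw [hmul]; exact hμ)

/-- An element outside `P` has a monomial free of variables in `P`. -/
lemma exists_free_monomial {P : Ideal (MvPolynomial (Fin (n + 1)) k)}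
    {s : MvPolynomial (Fin (n + 1)) k} (hs : s ∉ P) :
    ∃ σ ∈ s.support, ∀ j, σ j ≠ 0 → X j ∉ P := by
  classical
  by_contra h
  push_neg at h
  apply hs
  have hsP : s ∈ P := by
    rw [MvPolynomial.as_sum s]
    apply Ideal.sum_mem
    intro σ hσ
    obtain ⟨j, hj0, hjP⟩ := h σ hσ
    have hone : Finsupp.single j 1 ≤ σ :=
      Finsupp.single_le_iff.mpr (Nat.one_le_iff_ne_zero.mpr hj0)
    have hrw : (monomial σ (s.coeff σ) : MvPolynomial (Fin (n + 1)) k)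
        = monomial (σ - Finsupp.single j 1) (s.coeff σ) * X j := by
      rw [X, monomial_mul, mul_one, tsub_add_cancel_of_le hone]
    rw [hrw]
    exact Ideal.mul_mem_left _ _ hjP
  exact hsP

lemma filter_sum {ι : Type*} (p : Fin (n + 1) → Prop) [DecidablePred p]
    (t : Finset ι) (g : ι → (Fin (n + 1) →₀ ℕ)) :
    (∑ i ∈ t, g i).filter p = ∑ i ∈ t, (g i).filter p := by
  classical
  induction t using Finset.cons_induction with
  | empty => ext j; simp [Finsupp.filter_apply]
  | cons a s ha ih => rw [Finset.sum_cons, Finset.sum_cons, Finsupp.filter_add, ih]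

lemma filter_le_self (p : Fin (n + 1) → Prop) [DecidablePred p] (μ : Fin (n + 1) →₀ ℕ) :
    μ.filter p ≤ μ := by
  rw [Finsupp.le_def]
  intro j
  rw [Finsupp.filter_apply]
  split <;> simp

lemma filter_mono (p : Fin (n + 1) → Prop) [DecidablePred p] {μ ν : Fin (n + 1) →₀ ℕ}
    (h : μ ≤ ν) : μ.filter p ≤ ν.filter p := by
  rw [Finsupp.le_def] at h ⊢
  intro j
  rw [Finsupp.filter_apply, Finsupp.filter_apply]
  split
  · exact h j
  · exact le_refl 0

end Reg

section Key

variable {k : Type*} [Field k] {n : ℕ}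

set_option maxHeartbeats 1000000 in
lemma key {I P : Ideal (MvPolynomial (Fin (n + 1)) k)} (hP : P.IsPrime)
    (hPmax : ∀ P' ∈ associatedPrimes (MvPolynomial (Fin (n + 1)) k)
      (MvPolynomial (Fin (n + 1)) k ⧸ I), P' ≤ P)
    (S : Set (Fin (n + 1) →₀ ℕ))
    (hI : I = Ideal.span ((fun a => (monomial a (1 : k) : MvPolynomial (Fin (n + 1)) k)) '' S))
    {m : ℕ} {s f : MvPolynomial (Fin (n + 1)) k} (hs : s ∉ P) (h : s * f ∈ I ^ m) :
    f ∈ I ^ m := by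
  classical
  have miff : ∀ g : MvPolynomial (Fin (n + 1)) k, g ∈ I ^ m ↔ ∀ μ ∈ g.support,
      ∃ b : Fin m → (Fin (n + 1) →₀ ℕ),
        (∀ i, (monomial (b i) (1 : k) : MvPolynomial (Fin (n + 1)) k) ∈ I) ∧
        (∑ i, b i) ≤ μ := by
    intro g; rw [hI]; exact mem_pow_iff S m g
  rw [miff]
  intro μ0 hμ0
  by_contra hbad0
  set Qm : (Fin (n + 1) →₀ ℕ) → Prop := fun μ => ∃ b : Fin m → (Fin (n + 1) →₀ ℕ),
      (∀ i, (monomial (b i) (1 : k) : MvPolynomial (Fin (n + 1)) k) ∈ I) ∧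
      (∑ i, b i) ≤ μ with hQm
  obtain ⟨B, hBmem⟩ : ∃ B : Finset (Fin (n + 1) →₀ ℕ),
      ∀ μ, μ ∈ B ↔ μ ∈ f.support ∧ ¬ Qm μ :=
    ⟨f.support.filter (fun μ => ¬ Qm μ), fun μ => Finset.mem_filter⟩
  have hBne : B.Nonempty := ⟨μ0, (hBmem μ0).mpr ⟨hμ0, hbad0⟩⟩
  obtain ⟨fb, hcoeff⟩ : ∃ fb : MvPolynomial (Fin (n + 1)) k,
      ∀ γ, coeff γ fb = if γ ∈ B then coeff γ f else 0 := by
    refine ⟨∑ μ ∈ B, monomial μ (coeff μ f), fun γ => ?_⟩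
    rw [coeff_sum]
    simp only [coeff_monomial]
    exact Finset.sum_ite_eq' B γ (fun x => coeff x f)
  have hgood : f - fb ∈ I ^ m := by
    rw [miff]
    intro μ hμ
    have hc : coeff μ (f - fb) ≠ 0 := mem_support_iff.mp hμ
    rw [coeff_sub, hcoeff] at hc
    by_cases hcB : μ ∈ B
    · simp [hcB] at hc
    · have hμf : μ ∈ f.support := by
        rw [mem_support_iff]; simpa [hcB] using hc
      have hnn : ¬ ¬ Qm μ := fun hn => hcB ((hBmem μ).mpr ⟨hμf, hn⟩)
      exact not_not.mp hnn
  have hsfb : s * fb ∈ I ^ m := by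
    have hrw : s * fb = s * f - s * (f - fb) := by ring
    rw [hrw]
    exact Ideal.sub_mem _ h (Ideal.mul_mem_left _ _ hgood)
  have hsfb' := (miff _).mp hsfb
  set T : Finset (Fin (n + 1)) :=
    Finset.univ.filter (fun j => (X j : MvPolynomial (Fin (n + 1)) k) ∈ P) with hT
  have hAne : (s.support.filter fun ν => (∑ j ∈ T, ν j) = 0).Nonempty := by
    obtain ⟨σ, hσ, hσfree⟩ := exists_free_monomial hs
    refine ⟨σ, Finset.mem_filter.mpr ⟨hσ, ?_⟩⟩
    apply Finset.sum_eq_zero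
    intro j hj
    have hXj : (X j : MvPolynomial (Fin (n + 1)) k) ∈ P := (Finset.mem_filter.mp hj).2
    by_contra h0
    exact hσfree j h0 hXj
  obtain ⟨σ, hσA, μs, hμsB, huniq⟩ := SymbAux.key_pair s.support B T hBne hAne
  have hσsup : σ ∈ s.support := (Finset.mem_filter.mp hσA).1
  have hσw : (∑ j ∈ T, σ j) = 0 := (Finset.mem_filter.mp hσA).2
  have hσfree : ∀ j, (X j : MvPolynomial (Fin (n + 1)) k) ∈ P → σ j = 0 := by
    intro j hj
    exact Finset.sum_eq_zero_iff.mp hσw j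
      (Finset.mem_filter.mpr ⟨Finset.mem_univ j, hj⟩)
  have hcγ : coeff (σ + μs) (s * fb) = coeff σ s * coeff μs f := by
    rw [coeff_mul]
    have hmm : (σ, μs) ∈ Finset.HasAntidiagonal.antidiagonal (σ + μs) := Finset.HasAntidiagonal.mem_antidiagonal.mpr rfl
    rw [Finset.sum_eq_single_of_mem (σ, μs) hmm ?_]
    · show coeff σ s * coeff μs fb = coeff σ s * coeff μs f
      rw [hcoeff, if_pos hμsB]
    · rintro ⟨ν, μ⟩ hmem hne
      rw [Finset.HasAntidiagonal.mem_antidiagonal] at hmem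
      by_contra hnz
      have hν : ν ∈ s.support := by
        rw [mem_support_iff]
        intro h0
        exact hnz (by simp [h0])
      have hμB : μ ∈ B := by
        by_contra hcB
        exact hnz (by simp [hcoeff, hcB])
      obtain ⟨hν2, hμ2⟩ := huniq ν hν μ hμB hmem
      exact hne (by rw [hν2, hμ2])
  have hcne : coeff (σ + μs) (s * fb) ≠ 0 := by
    rw [hcγ]
    exact mul_ne_zero (mem_support_iff.mp hσsup)
      (mem_support_iff.mp ((hBmem μs).mp hμsB).1)
  have hQ : Qm (σ + μs) := hsfb' _ (mem_support_iff.mpr hcne)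
  have hQμs : Qm μs := by
    obtain ⟨b, hbI, hble⟩ := hQ
    refine ⟨fun i => (b i).filter (fun j => (X j : MvPolynomial (Fin (n + 1)) k) ∈ P),
      fun i => filter_mem hP hPmax (hbI i), ?_⟩
    have h1 : (∑ i, (b i).filter fun j => (X j : MvPolynomial (Fin (n + 1)) k) ∈ P)
        = (∑ i, b i).filter (fun j => (X j : MvPolynomial (Fin (n + 1)) k) ∈ P) :=
      (filter_sum _ _ _).symm
    rw [h1]
    refine le_trans (filter_mono _ hble) ?_
    rw [Finsupp.filter_add]
    have hfσ : σ.filter (fun j => (X j : MvPolynomial (Fin (n + 1)) k) ∈ P) = 0 := by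
      ext j
      rw [Finsupp.filter_apply]
      split
      · next hj => exact hσfree j hj
      · rfl
    rw [hfσ, zero_add]
    exact filter_le_self _ _
  exact ((hBmem μs).mp hμsB).2 hQμs

end Key

lemma mem_contracted_iff {R : Type*} [CommRing R] [IsDomain R] {P : Ideal R} [hP : P.IsPrime]
    {J : Ideal R} {f : R} :
    f ∈ (Ideal.map (algebraMap R (Localization.AtPrime P)) J).comap
        (algebraMap R (Localization.AtPrime P)) ↔ ∃ s, s ∉ P ∧ s * f ∈ J := by
  rw [Ideal.mem_comap]
  constructor
  · intro h
    rw [IsLocalization.mem_map_algebraMap_iff P.primeCompl (Localization.AtPrime P)] at h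
    obtain ⟨⟨a, t⟩, ht⟩ := h
    have heq : algebraMap R (Localization.AtPrime P) ((t : R) * f)
        = algebraMap R (Localization.AtPrime P) (a : R) := by
      rw [map_mul, mul_comm]; exact ht
    have hinj : Function.Injective (algebraMap R (Localization.AtPrime P)) :=
      IsLocalization.injective _ P.primeCompl_le_nonZeroDivisors
    have heq2 : (t : R) * f = (a : R) := hinj heq
    exact ⟨t, t.2, by rw [heq2]; exact a.2⟩
  · rintro ⟨s, hs, hsf⟩
    have h1 : algebraMap R (Localization.AtPrime P) (s * f)
        ∈ Ideal.map (algebraMap R (Localization.AtPrime P)) J :=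
      Ideal.mem_map_of_mem _ hsf
    rw [map_mul] at h1
    exact (Ideal.unit_mul_mem_iff_mem _
      (IsLocalization.map_units (M := P.primeCompl) (Localization.AtPrime P) ⟨s, hs⟩)).mp h1

theorem symbolic_power_eq_pow_of_unique_maximal_ass {k : Type*} [Field k] {n : ℕ}
    (I : Ideal (MvPolynomial (Fin (n + 1)) k)) (hmon : IsMonomialIdeal I)
    (huniq : ∃ P ∈ associatedPrimes (MvPolynomial (Fin (n + 1)) k)
        (MvPolynomial (Fin (n + 1)) k ⧸ I),
      ∀ P' ∈ associatedPrimes (MvPolynomial (Fin (n + 1)) k)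
        (MvPolynomial (Fin (n + 1)) k ⧸ I), P' ≤ P)
    (m : ℕ) (hm : 1 ≤ m) :
    symbolicPower I m = I ^ m := by
  classical
  obtain ⟨S, hI⟩ := hmon
  obtain ⟨P, hPass, hPmax⟩ := huniq
  haveI hP : P.IsPrime := hPass.isPrime
  apply le_antisymm
  · have h1 : symbolicPower I m ≤ contractedPower I m P hP :=
      iInf_le (fun P : {P : Ideal (MvPolynomial (Fin (n + 1)) k) //
          P ∈ associatedPrimes (MvPolynomial (Fin (n + 1)) k)
            (MvPolynomial (Fin (n + 1)) k ⧸ I)} => contractedPower I m P.1 P.2.isPrime)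
        ⟨P, hPass⟩
    refine h1.trans ?_
    intro f hf
    have hf' : ∃ s, s ∉ P ∧ s * f ∈ I ^ m :=
      (mem_contracted_iff (P := P) (J := I ^ m)).mp hf
    obtain ⟨s, hs, hsf⟩ := hf'
    exact key hP hPmax S hI hs hsf
  · refine le_iInf fun Q => ?_
    exact Ideal.le_comap_map
end

section
/- Let R = k[x_0,…,x_n] be a polynomial ring over a field k, let I ⊆ R be a monomial ideal with primary decomposition I = Q_1 ∩ ⋯ ∩ Q_k into primary monomial ideals, and let P be an associated prime of I. Let Q_{⊆P} be the intersection of all Q_i with √(Q_i) ⊆ P. Then for all positive integers m, Q_{⊆P}^m = R ∩ I^m R_P, i.e., the m-th power of Q_{⊆P} equals the contraction to R of the extension of I^m to the localization R_P. -/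
open MvPolynomial Pointwise

namespace QsubAux
variable {k : Type*} [Field k] {n : ℕ}



lemma aux_mem_of_monomials {M : Ideal (MvPolynomial (Fin (n+1)) k)} {f : MvPolynomial (Fin (n+1)) k}
    (h : ∀ a ∈ f.support, (monomial a (1:k) : MvPolynomial (Fin (n+1)) k) ∈ M) : f ∈ M := by
  rw [← MvPolynomial.support_sum_monomial_coeff f]
  refine Ideal.sum_mem _ fun a ha => ?_
  have : (monomial a (f.coeff a) : MvPolynomial (Fin (n+1)) k) = C (f.coeff a) * monomial a 1 := by
    rw [C_mul_monomial, mul_one]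
  rw [this]
  exact Ideal.mul_mem_left _ _ (h a ha)

lemma aux_up {M : Ideal (MvPolynomial (Fin (n+1)) k)} {a b : Fin (n+1) →₀ ℕ}
    (h : (monomial a (1:k) : MvPolynomial (Fin (n+1)) k) ∈ M) (hab : a ≤ b) :
    (monomial b (1:k) : MvPolynomial (Fin (n+1)) k) ∈ M := by
  have : (monomial b (1:k) : MvPolynomial (Fin (n+1)) k) = monomial (b - a) 1 * monomial a 1 := by
    rw [monomial_mul, one_mul, tsub_add_cancel_of_le hab]
  rw [this]
  exact Ideal.mul_mem_left _ _ h

lemma aux_mono_mem {M : Ideal (MvPolynomial (Fin (n+1)) k)} (hM : IsMonomialIdeal M)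
    {f} (hf : f ∈ M) {a} (ha : a ∈ f.support) : (monomial a (1:k) : MvPolynomial (Fin (n+1)) k) ∈ M := by
  obtain ⟨S, rfl⟩ := hM
  obtain ⟨s, hs, hsa⟩ := mem_ideal_span_monomial_image.mp hf a ha
  exact aux_up (Ideal.subset_span ⟨s, hs, rfl⟩) hsa


noncomputable def ares (W : Set (Fin (n+1))) (a : Fin (n+1) →₀ ℕ) : Fin (n+1) →₀ ℕ :=
  letI := Classical.decPred (· ∈ W); a.filter (· ∈ W)

lemma ares_apply_pos {W : Set (Fin (n+1))} (a : Fin (n+1) →₀ ℕ) {j : Fin (n+1)} (h : j ∈ W) :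
    ares W a j = a j := by
  classical
  simp only [ares, Finsupp.filter_apply]
  split <;> simp_all

lemma ares_apply_neg {W : Set (Fin (n+1))} (a : Fin (n+1) →₀ ℕ) {j : Fin (n+1)} (h : j ∉ W) :
    ares W a j = 0 := by
  classical
  simp only [ares, Finsupp.filter_apply]
  split <;> simp_all

lemma ares_le (W : Set (Fin (n+1))) (a : Fin (n+1) →₀ ℕ) : ares W a ≤ a := by
  intro j
  by_cases h : j ∈ W
  · rw [ares_apply_pos a h]
  · rw [ares_apply_neg a h]; simp

lemma ares_add (W : Set (Fin (n+1))) (a b : Fin (n+1) →₀ ℕ) :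
    ares W (a + b) = ares W a + ares W b := by
  ext j
  by_cases h : j ∈ W
  · simp [ares_apply_pos _ h]
  · simp [ares_apply_neg _ h]

lemma ares_mono (W : Set (Fin (n+1))) {a b : Fin (n+1) →₀ ℕ} (h : a ≤ b) :
    ares W a ≤ ares W b := by
  intro j
  by_cases hj : j ∈ W
  · rw [ares_apply_pos _ hj, ares_apply_pos _ hj]; exact h j
  · rw [ares_apply_neg _ hj]; simp

lemma ares_compl_add (W : Set (Fin (n+1))) (a : Fin (n+1) →₀ ℕ) :
    ares Wᶜ a + ares W a = a := by
  ext j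
  by_cases h : j ∈ W
  · simp [ares_apply_pos _ h, ares_apply_neg (W := Wᶜ) a (by simpa using h)]
  · simp [ares_apply_neg _ h, ares_apply_pos (W := Wᶜ) a (by simpa using h)]

lemma ares_support_subset {W : Set (Fin (n+1))} {a : Fin (n+1) →₀ ℕ} {j : Fin (n+1)}
    (h : j ∈ (ares W a).support) : j ∈ W := by
  by_contra hj
  exact (Finsupp.mem_support_iff.mp h) (ares_apply_neg a hj)

def adeg (a : Fin (n+1) →₀ ℕ) : ℕ := ∑ j, a j

lemma adeg_add (a b : Fin (n+1) →₀ ℕ) : adeg (a + b) = adeg a + adeg b := by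
  simp [adeg, Finset.sum_add_distrib]

lemma adeg_eq_zero {a : Fin (n+1) →₀ ℕ} (h : adeg a = 0) : a = 0 := by
  ext j
  have := Finset.sum_eq_zero_iff.mp h j (Finset.mem_univ j)
  simpa using this

lemma monomial_eq_prod (a : Fin (n+1) →₀ ℕ) :
    (monomial a (1:k) : MvPolynomial (Fin (n+1)) k) = ∏ j ∈ a.support, (X j : MvPolynomial (Fin (n+1)) k) ^ a j := by
  rw [monomial_eq, C_1, one_mul, Finsupp.prod]

lemma mem_prime_of_monomial_mem {P : Ideal (MvPolynomial (Fin (n+1)) k)} (hP : P.IsPrime)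
    {a : Fin (n+1) →₀ ℕ} (h : (monomial a (1:k) : MvPolynomial (Fin (n+1)) k) ∈ P) :
    ∃ j ∈ a.support, (X j : MvPolynomial (Fin (n+1)) k) ∈ P := by
  rw [monomial_eq_prod] at h
  haveI := hP
  obtain ⟨j, hj, hjP⟩ := (Ideal.IsPrime.prod_mem_iff).mp h
  exact ⟨j, hj, hP.mem_of_pow_mem _ hjP⟩


lemma ares_add_compl (W : Set (Fin (n+1))) (a : Fin (n+1) →₀ ℕ) :
    ares W a + ares Wᶜ a = a := by
  have := ares_compl_add W a
  rw [add_comm (ares Wᶜ a) (ares W a)] at this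
  exact this

noncomputable def fpart (x : MvPolynomial (Fin (n+1)) k) (p : (Fin (n+1) →₀ ℕ) → Prop) :
    MvPolynomial (Fin (n+1)) k :=
  letI := Classical.decPred p
  ∑ a ∈ x.support.filter p, monomial a (coeff a x)

lemma coeff_fpart_pos (x : MvPolynomial (Fin (n+1)) k) (p : (Fin (n+1) →₀ ℕ) → Prop)
    {c : Fin (n+1) →₀ ℕ} (h : p c) : coeff c (fpart x p) = coeff c x := by
  classical
  rw [fpart, coeff_sum]
  simp_rw [coeff_monomial]
  rw [Finset.sum_ite_eq' (x.support.filter p) c (fun a => coeff a x)]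
  by_cases hc : c ∈ x.support
  · rw [if_pos]; exact Finset.mem_filter.mpr ⟨hc, h⟩
  · rw [if_neg, eq_comm]
    · exact notMem_support_iff.mp hc
    · intro hmem; exact hc (Finset.mem_filter.mp hmem).1

lemma coeff_fpart_neg (x : MvPolynomial (Fin (n+1)) k) (p : (Fin (n+1) →₀ ℕ) → Prop)
    {c : Fin (n+1) →₀ ℕ} (h : ¬ p c) : coeff c (fpart x p) = 0 := by
  classical
  rw [fpart, coeff_sum]
  simp_rw [coeff_monomial]
  rw [Finset.sum_ite_eq' (x.support.filter p) c (fun a => coeff a x)]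
  rw [if_neg]
  intro hmem; exact h (Finset.mem_filter.mp hmem).2

lemma sat {K : Ideal (MvPolynomial (Fin (n+1)) k)} (W : Set (Fin (n+1)))
    (H1 : ∀ f ∈ K, ∀ a ∈ f.support, (monomial a (1:k) : MvPolynomial (Fin (n+1)) k) ∈ K)
    (H2 : ∀ a, (monomial a (1:k) : MvPolynomial (Fin (n+1)) k) ∈ K ↔
      (monomial (ares W a) (1:k) : MvPolynomial (Fin (n+1)) k) ∈ K)
    {s x : MvPolynomial (Fin (n+1)) k} (hb : ∃ b ∈ s.support, ares W b = 0)
    (hsx : s * x ∈ K) : x ∈ K := by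
  classical
  by_contra hx
  set p : (Fin (n+1) →₀ ℕ) → Prop := fun a => (monomial a (1:k) : MvPolynomial (Fin (n+1)) k) ∈ K
    with hp
  have hDne : ∃ a ∈ x.support, ¬ p a := by
    by_contra h
    push_neg at h
    exact hx (aux_mem_of_monomials h)
  set T : Set ℕ := {t | ∃ a ∈ x.support, ¬ p a ∧ adeg (ares W a) = t} with hT
  have hTne : T.Nonempty := by
    obtain ⟨a, ha, hpa⟩ := hDne
    exact ⟨adeg (ares W a), a, ha, hpa, rfl⟩
  obtain ⟨a₀, ha₀x, ha₀K, ha₀d⟩ : ∃ a ∈ x.support, ¬ p a ∧ adeg (ares W a) = sInf T :=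
    Nat.sInf_mem hTne
  set d := ares W a₀ with hd
  have hmin : ∀ a ∈ x.support, ¬ p a → adeg d ≤ adeg (ares W a) := by
    intro a ha hk
    rw [hd, ha₀d]
    exact Nat.sInf_le ⟨a, ha, hk, rfl⟩
  -- split x into good and bad parts
  set x'' := fpart x p with hx''
  set x' := fpart x (fun a => ¬ p a) with hx'
  have hxsplit : x = x'' + x' := by
    apply MvPolynomial.ext
    intro c
    rw [coeff_add]
    by_cases h : p c
    · rw [coeff_fpart_pos _ _ h, coeff_fpart_neg _ _ (by simpa using h)]; ring
    · rw [coeff_fpart_neg _ _ h, coeff_fpart_pos _ _ (by simpa using h)]; ring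
  have hx''K : x'' ∈ K := by
    apply aux_mem_of_monomials
    intro a ha
    by_contra hnot
    exact (mem_support_iff.mp ha) (coeff_fpart_neg x p hnot)
  have hsx' : s * x' ∈ K := by
    have : s * x' = s * x - s * x'' := by rw [hxsplit]; ring
    rw [this]
    exact Ideal.sub_mem _ hsx (Ideal.mul_mem_left _ _ hx''K)
  -- the graded pieces
  set s₀ := fpart s (fun u => ares W u = 0) with hs₀
  set x₀ := fpart x' (fun v => ares W v = d) with hx₀
  have key : ∀ c, ares W c = d → coeff c (s * x') = coeff c (s₀ * x₀) := by
    intro c hc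
    rw [coeff_mul, coeff_mul]
    refine Finset.sum_congr rfl ?_
    rintro ⟨u, v⟩ huv
    rw [Finset.HasAntidiagonal.mem_antidiagonal] at huv
    by_cases hv0 : coeff v x' = 0
    · have h₀ : coeff v x₀ = 0 := by
        by_cases h : ares W v = d
        · rw [coeff_fpart_pos x' (fun v => ares W v = d) h]; exact hv0
        · exact coeff_fpart_neg x' (fun v => ares W v = d) h
      rw [hv0, h₀]; ring
    · have hnp : ¬ p v := by
        by_contra h
        exact hv0 (coeff_fpart_neg x (fun a => ¬ p a) (by simpa using h))
      have hvx : coeff v x' = coeff v x := coeff_fpart_pos x (fun a => ¬ p a) hnp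
      have hvsupp : v ∈ x.support := mem_support_iff.mpr (by rw [← hvx]; exact hv0)
      have hdeg : adeg d ≤ adeg (ares W v) := hmin v hvsupp hnp
      have hadd : ares W u + ares W v = d := by rw [← ares_add, huv, ← hc]
      have hdegs : adeg (ares W u) + adeg (ares W v) = adeg d := by
        rw [← adeg_add, hadd]
      have hu0 : adeg (ares W u) = 0 := by omega
      have hu0' : ares W u = 0 := adeg_eq_zero hu0
      have hvd : ares W v = d := by rw [hu0', zero_add] at hadd; exact hadd
      rw [coeff_fpart_pos s (fun u => ares W u = 0) hu0', coeff_fpart_pos x' (fun v => ares W v = d) hvd]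
  have suppP : ∀ c ∈ (s₀ * x₀).support, ares W c = d := by
    intro c hcmem
    obtain ⟨u, hu, v, hv, rfl⟩ := Finset.mem_add.mp (MvPolynomial.support_mul _ _ hcmem)
    have hu0 : ares W u = 0 := by
      by_contra h
      exact (mem_support_iff.mp hu) (coeff_fpart_neg s (fun u => ares W u = 0) h)
    have hvd : ares W v = d := by
      by_contra h
      exact (mem_support_iff.mp hv) (coeff_fpart_neg x' (fun v => ares W v = d) h)
    rw [ares_add, hu0, hvd, zero_add]
  have hP0 : s₀ * x₀ = 0 := by
    by_contra hne
    obtain ⟨c, hc⟩ := (MvPolynomial.support_nonempty).mpr hne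
    have hcd := suppP c hc
    have h1 : coeff c (s * x') ≠ 0 := by
      rw [key c hcd]; exact mem_support_iff.mp hc
    have h2 : (monomial c (1:k) : MvPolynomial (Fin (n+1)) k) ∈ K :=
      H1 _ hsx' c (mem_support_iff.mpr h1)
    have h3 : (monomial d (1:k) : MvPolynomial (Fin (n+1)) k) ∈ K := by
      rw [H2] at h2; rwa [hcd] at h2
    apply ha₀K
    show (monomial a₀ (1:k) : MvPolynomial (Fin (n+1)) k) ∈ K
    rw [H2, ← hd]
    exact h3
  rcases mul_eq_zero.mp hP0 with h | h
  · obtain ⟨b₀, hb₀, hb₀res⟩ := hb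
    have : coeff b₀ s₀ = coeff b₀ s := coeff_fpart_pos s (fun u => ares W u = 0) hb₀res
    rw [h] at this
    exact (mem_support_iff.mp hb₀) (by rw [← this]; rfl)
  · have h1 : coeff a₀ x₀ = coeff a₀ x' := coeff_fpart_pos x' (fun v => ares W v = d) hd.symm
    have h2 : coeff a₀ x' = coeff a₀ x := coeff_fpart_pos x (fun a => ¬ p a) ha₀K
    rw [h] at h1
    apply mem_support_iff.mp ha₀x
    rw [← h2, ← h1]
    rfl
lemma span_mono_mul (S T : Set (Fin (n+1) →₀ ℕ)) :
    Ideal.span ((fun a => (monomial a (1:k) : MvPolynomial (Fin (n+1)) k)) '' S) *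
      Ideal.span ((fun a => (monomial a (1:k) : MvPolynomial (Fin (n+1)) k)) '' T) =
    Ideal.span ((fun a => (monomial a (1:k) : MvPolynomial (Fin (n+1)) k)) ''
      (Set.image2 (· + ·) S T)) := by
  rw [Ideal.span_mul_span']
  congr 1
  ext f
  constructor
  · rintro ⟨g, ⟨a, ha, rfl⟩, h, ⟨b, hb, rfl⟩, rfl⟩
    exact ⟨a + b, Set.mem_image2_of_mem ha hb, by simp [monomial_mul]⟩
  · rintro ⟨c, ⟨a, ha, b, hb, rfl⟩, rfl⟩
    exact ⟨monomial a 1, ⟨a, ha, rfl⟩, monomial b 1, ⟨b, hb, rfl⟩, by simp [monomial_mul]⟩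

lemma pow_span (W : Set (Fin (n+1))) (S : Set (Fin (n+1) →₀ ℕ)) (hS : ∀ a ∈ S, ares W a ∈ S)
    (m : ℕ) (hm : 1 ≤ m) :
    ∃ T : Set (Fin (n+1) →₀ ℕ), (∀ a ∈ T, ares W a ∈ T) ∧
      (Ideal.span ((fun a => (monomial a (1:k) : MvPolynomial (Fin (n+1)) k)) '' S)) ^ m =
        Ideal.span ((fun a => (monomial a (1:k) : MvPolynomial (Fin (n+1)) k)) '' T) := by
  induction m, hm using Nat.le_induction with
  | base => exact ⟨S, hS, by rw [pow_one]⟩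
  | succ m hm ih =>
    obtain ⟨T, hT, hTeq⟩ := ih
    refine ⟨Set.image2 (· + ·) T S, ?_, ?_⟩
    · rintro a ⟨u, hu, v, hv, rfl⟩
      rw [ares_add]
      exact Set.mem_image2_of_mem (hT u hu) (hS v hv)
    · rw [pow_succ, hTeq, span_mono_mul]

lemma strip {P Qi : Ideal (MvPolynomial (Fin (n+1)) k)} (hP : P.IsPrime)
    (hQ : Qi.IsPrimary) (hrad : Qi.radical ≤ P) {a : Fin (n+1) →₀ ℕ}
    (ha : (monomial a (1:k) : MvPolynomial (Fin (n+1)) k) ∈ Qi) :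
    (monomial (ares {j | (X j : MvPolynomial (Fin (n+1)) k) ∈ P} a) (1:k) :
      MvPolynomial (Fin (n+1)) k) ∈ Qi := by
  set W := {j | (X j : MvPolynomial (Fin (n+1)) k) ∈ P} with hW
  have hmul : (monomial a (1:k) : MvPolynomial (Fin (n+1)) k)
      = monomial (ares W a) 1 * monomial (ares Wᶜ a) 1 := by
    rw [monomial_mul, one_mul, ares_add_compl]
  rw [hmul] at ha
  rcases (Ideal.isPrimary_iff.mp hQ).2 ha with h | h
  · exact h
  · exfalso
    have hm : (monomial (ares Wᶜ a) (1:k) : MvPolynomial (Fin (n+1)) k) ∈ P := hrad h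
    obtain ⟨j, hj, hjP⟩ := mem_prime_of_monomial_mem hP hm
    exact (ares_support_subset hj) hjP

lemma contraction_mem {R : Type*} [CommRing R] [IsDomain R] (K P : Ideal R)
    (hP : P.IsPrime) (x : R) :
    letI := hP
    (x ∈ (Ideal.map (algebraMap R (Localization.AtPrime P)) K).comap
      (algebraMap R (Localization.AtPrime P)) ↔ ∃ t ∈ P.primeCompl, t * x ∈ K) := by
  haveI := hP
  constructor
  · intro hx
    rw [Ideal.mem_comap] at hx
    obtain ⟨⟨⟨y, hy⟩, ⟨t, ht⟩⟩, hxy⟩ :=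
      (IsLocalization.mem_map_algebraMap_iff P.primeCompl _).mp hx
    refine ⟨t, ht, ?_⟩
    have hinj := IsLocalization.injective (Localization.AtPrime P)
      P.primeCompl_le_nonZeroDivisors
    have : x * t = y := by
      apply hinj
      rw [map_mul]
      exact hxy
    rw [mul_comm, this]
    exact hy
  · rintro ⟨t, ht, htx⟩
    rw [Ideal.mem_comap]
    have h1 : algebraMap R (Localization.AtPrime P) (t * x) ∈
        Ideal.map (algebraMap R (Localization.AtPrime P)) K := Ideal.mem_map_of_mem _ htx
    rw [map_mul] at h1
    exact (Ideal.unit_mul_mem_iff_mem _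
      (IsLocalization.map_units (Localization.AtPrime P) ⟨t, ht⟩)).mp h1

theorem QsubP_pow_eq_contraction' {k : Type*} [Field k] {n : ℕ}
    (I : Ideal (MvPolynomial (Fin (n + 1)) k)) (s : ℕ)
    (Q : Fin s → Ideal (MvPolynomial (Fin (n + 1)) k))
    (hprimary : ∀ i, (Q i).IsPrimary) (hmonQ : ∀ i, IsMonomialIdeal (Q i))
    (hdecomp : I = ⨅ i, Q i)
    (P : Ideal (MvPolynomial (Fin (n + 1)) k)) (hPprime : P.IsPrime)
    (m : ℕ) (hm : 1 ≤ m) :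
    (⨅ i : {i : Fin s // (Q i).radical ≤ P}, Q i.1) ^ m =
      (Ideal.map (algebraMap _ (Localization.AtPrime P)) (I ^ m)).comap
        (algebraMap _ (Localization.AtPrime P)) := by
  classical
  haveI := hPprime
  set J : Ideal (MvPolynomial (Fin (n+1)) k) := ⨅ i : {i : Fin s // (Q i).radical ≤ P}, Q i.1
    with hJ
  set W : Set (Fin (n+1)) := {j | (X j : MvPolynomial (Fin (n+1)) k) ∈ P} with hWdef
  set SJ : Set (Fin (n+1) →₀ ℕ) :=
    {a | (monomial a (1:k) : MvPolynomial (Fin (n+1)) k) ∈ J} with hSJ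
  have hJmono : ∀ f ∈ J, ∀ a ∈ f.support,
      (monomial a (1:k) : MvPolynomial (Fin (n+1)) k) ∈ J := by
    intro f hf a ha
    rw [hJ, Ideal.mem_iInf] at hf ⊢
    intro i
    exact aux_mono_mem (hmonQ i.1) (hf i) ha
  have hJspan : J = Ideal.span
      ((fun a => (monomial a (1:k) : MvPolynomial (Fin (n+1)) k)) '' SJ) := by
    apply le_antisymm
    · intro f hf
      rw [mem_ideal_span_monomial_image]
      intro a ha
      exact ⟨a, hJmono f hf a ha, le_rfl⟩
    · rw [Ideal.span_le]
      rintro g ⟨a, ha, rfl⟩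
      exact ha
  have hSJres : ∀ a ∈ SJ, ares W a ∈ SJ := by
    intro a ha
    have ha' : ∀ i : {i : Fin s // (Q i).radical ≤ P},
        (monomial a (1:k) : MvPolynomial (Fin (n+1)) k) ∈ Q i.1 := Ideal.mem_iInf.mp ha
    show (monomial (ares W a) (1:k) : MvPolynomial (Fin (n+1)) k) ∈ J
    rw [hJ, Ideal.mem_iInf]
    intro i
    exact strip hPprime (hprimary i.1) i.2 (ha' i)
  obtain ⟨T, hTres, hTspan⟩ := pow_span (k := k) W SJ hSJres m hm
  have hJm : J ^ m = Ideal.span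
      ((fun a => (monomial a (1:k) : MvPolynomial (Fin (n+1)) k)) '' T) := by
    rw [hJspan, hTspan]
  have hmemT : ∀ b ∈ T, (monomial b (1:k) : MvPolynomial (Fin (n+1)) k) ∈ J ^ m :=
    fun b hb => hJm ▸ Ideal.subset_span ⟨b, hb, rfl⟩
  have H1 : ∀ f ∈ J ^ m, ∀ a ∈ f.support,
      (monomial a (1:k) : MvPolynomial (Fin (n+1)) k) ∈ J ^ m :=
    fun f hf a ha => aux_mono_mem ⟨T, hJm⟩ hf ha
  have H2 : ∀ a, (monomial a (1:k) : MvPolynomial (Fin (n+1)) k) ∈ J ^ m ↔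
      (monomial (ares W a) (1:k) : MvPolynomial (Fin (n+1)) k) ∈ J ^ m := by
    intro a
    constructor
    · intro h
      rw [hJm, mem_ideal_span_monomial_image] at h
      obtain ⟨si, hsi, hsile⟩ := h a (by
        rw [mem_support_iff, coeff_monomial, if_pos rfl]; exact one_ne_zero)
      exact aux_up (hmemT _ (hTres si hsi)) (ares_mono W hsile)
    · intro h
      exact aux_up h (ares_le W a)
  have hI_le_J : I ≤ J := by
    rw [hdecomp, hJ]
    exact le_iInf fun i => iInf_le _ i.1
  ext x
  rw [contraction_mem (I ^ m) P hPprime x]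
  constructor
  · intro hx
    have hchoice : ∀ i : Fin s, ∃ c : MvPolynomial (Fin (n+1)) k,
        c ∉ P ∧ (¬ (Q i).radical ≤ P → c ∈ Q i) := by
      intro i
      by_cases h : (Q i).radical ≤ P
      · exact ⟨1, (Ideal.ne_top_iff_one P).mp hPprime.ne_top, fun h' => absurd h h'⟩
      · obtain ⟨y, hy, hyP⟩ := SetLike.not_le_iff_exists.mp h
        obtain ⟨t, ht⟩ := Ideal.mem_radical_iff.mp hy
        exact ⟨y ^ t, fun hp => hyP (hPprime.mem_of_pow_mem t hp), fun _ => ht⟩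
    choose c hcP hcQ using hchoice
    set σ₀ : MvPolynomial (Fin (n+1)) k := ∏ i, c i with hσ₀
    have hσ₀P : σ₀ ∈ P.primeCompl := by
      intro hmem
      obtain ⟨i, _, hi⟩ := (Ideal.IsPrime.prod_mem_iff).mp hmem
      exact hcP i hi
    have hσJ : ∀ z ∈ J, σ₀ * z ∈ I := by
      intro z hz
      rw [hdecomp, Ideal.mem_iInf]
      intro i
      by_cases h : (Q i).radical ≤ P
      · exact Ideal.mul_mem_left _ _ (Ideal.mem_iInf.mp hz ⟨i, h⟩)
      · have hσQ : σ₀ ∈ Q i := by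
          rw [hσ₀, ← Finset.mul_prod_erase Finset.univ c (Finset.mem_univ i)]
          exact Ideal.mul_mem_right _ _ (hcQ i h)
        exact Ideal.mul_mem_right _ _ hσQ
    have hspan : Ideal.span {σ₀} * J ≤ I := by
      rw [Ideal.mul_le]
      intro r hr z hz
      obtain ⟨t, rfl⟩ := Ideal.mem_span_singleton'.mp hr
      rw [mul_assoc]
      exact Ideal.mul_mem_left _ _ (hσJ z hz)
    refine ⟨σ₀ ^ m, pow_mem hσ₀P m, ?_⟩
    have h1 : σ₀ ^ m * x ∈ (Ideal.span {σ₀} * J) ^ m := by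
      rw [mul_pow]
      refine Ideal.mul_mem_mul ?_ hx
      rw [Ideal.span_singleton_pow]
      exact Ideal.subset_span rfl
    exact Ideal.pow_right_mono hspan m h1
  · rintro ⟨t, ht, htx⟩
    have htJm : t * x ∈ J ^ m := Ideal.pow_right_mono hI_le_J m htx
    refine sat W H1 H2 ?_ htJm
    by_contra hball
    push_neg at hball
    have htW : t ∈ Ideal.span (X '' W : Set (MvPolynomial (Fin (n+1)) k)) := by
      rw [mem_ideal_span_X_image]
      intro b hb
      by_contra hno
      push_neg at hno
      refine hball b hb ?_
      ext j
      by_cases hjW : j ∈ W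
      · rw [ares_apply_pos b hjW]
        simpa using hno j hjW
      · rw [ares_apply_neg b hjW]
        rfl
    have : t ∈ P := by
      refine Ideal.span_le.mpr ?_ htW
      rintro g ⟨j, hjW, rfl⟩
      exact hjW
    exact ht this
end QsubAux

theorem QsubP_pow_eq_contraction {k : Type*} [Field k] {n : ℕ}
    (I : Ideal (MvPolynomial (Fin (n + 1)) k)) (hmon : IsMonomialIdeal I) (s : ℕ)
    (Q : Fin s → Ideal (MvPolynomial (Fin (n + 1)) k))
    (hprimary : ∀ i, (Q i).IsPrimary) (hmonQ : ∀ i, IsMonomialIdeal (Q i))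
    (hdecomp : I = ⨅ i, Q i)
    (P : Ideal (MvPolynomial (Fin (n + 1)) k)) (hPprime : P.IsPrime)
    (hP : P ∈ associatedPrimes (MvPolynomial (Fin (n + 1)) k)
      (MvPolynomial (Fin (n + 1)) k ⧸ I))
    (m : ℕ) (hm : 1 ≤ m) :
    (⨅ i : {i : Fin s // (Q i).radical ≤ P}, Q i.1) ^ m = contractedPower I m P hPprime := by
  exact QsubAux.QsubP_pow_eq_contraction' I s Q hprimary hmonQ hdecomp P hPprime m hm
end

section
/- Let R = k[x_0,…,x_n] be a polynomial ring over a field k and let I ⊆ R be a monomial ideal. For each associated prime P of I, set Q_{⊆P} = R ∩ I R_P (the contraction of the extension of I to the localization R_P). Then for every positive integer m, the m-th symbolic power of I is I^{(m)} = ⋂_{P ∈ maxAss(I)} Q_{⊆P}^m. -/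
open MvPolynomial Pointwise

namespace SymbAux
open Finsupp

abbrev ExpF (n : ℕ) := Fin (n + 1) →₀ ℕ

noncomputable section
variable {n : ℕ}

open Classical in
def rA (A : Set (Fin (n + 1))) (a : ExpF n) : ExpF n := a.filter (· ∈ A)

lemma rA_apply_mem {A : Set (Fin (n+1))} {a : ExpF n} {i} (h : i ∈ A) : rA A a i = a i := by
  classical simp [rA, Finsupp.filter_apply, h]

lemma rA_apply_not_mem {A : Set (Fin (n+1))} {a : ExpF n} {i} (h : i ∉ A) : rA A a i = 0 := by
  classical simp [rA, Finsupp.filter_apply, h]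

lemma rA_add (A : Set (Fin (n+1))) (a b : ExpF n) : rA A (a + b) = rA A a + rA A b := by
  ext i
  by_cases h : i ∈ A <;> simp [rA_apply_mem, rA_apply_not_mem, h]

lemma rA_le (A : Set (Fin (n+1))) (a : ExpF n) : rA A a ≤ a := by
  rw [Finsupp.le_def]
  intro i
  by_cases h : i ∈ A <;> simp [rA_apply_mem, rA_apply_not_mem, h]

lemma rA_zero (A : Set (Fin (n+1))) : rA A 0 = 0 := by
  ext i; by_cases h : i ∈ A <;> simp [rA_apply_mem, rA_apply_not_mem, h]

def EOrd (A : Set (Fin (n + 1))) (c : ExpF n) : (Lex (ExpF n))ᵒᵈ ×ₗ Lex (ExpF n) :=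
  toLex (OrderDual.toDual (toLex (rA A c)), toLex c)

lemma EOrd_add (A : Set (Fin (n+1))) (a b : ExpF n) :
    EOrd A (a + b) = EOrd A a + EOrd A b := by
  unfold EOrd; rw [rA_add]; rfl

lemma EOrd_injective (A : Set (Fin (n+1))) : Function.Injective (EOrd A) := by
  intro a b h
  exact congrArg (fun z => ofLex (ofLex z).2) h

/-- If `b₀ ∈` a set on which `EOrd` is maximized at `b`, and `rA A b₀ = 0`, then `rA A b = 0`. -/
lemma rA_eq_zero_of_EOrd_le {A : Set (Fin (n+1))} {b₀ b : ExpF n}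
    (h : EOrd A b₀ ≤ EOrd A b) (h0 : rA A b₀ = 0) : rA A b = 0 := by
  rcases Prod.Lex.le_iff.mp h with h1 | h1
  · exfalso
    have h2 : toLex (rA A b) < toLex (rA A b₀) := h1
    rw [h0] at h2
    exact absurd (Finsupp.toLex_monotone (zero_le (a := rA A b))) (not_le_of_gt h2)
  · have : toLex (rA A b₀) = toLex (rA A b) := OrderDual.toDual_inj.mp h1.1.symm ▸ rfl
    have h2 : rA A b₀ = rA A b := OrderDual.toDual_inj.mp h1.1
    rw [← h2, h0]

variable {k : Type*} [Field k]

lemma coeff_mul_max (A : Set (Fin (n+1))) (s x : MvPolynomial (Fin (n+1)) k) {b c : ExpF n}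
    (hb : b ∈ s.support) (hc : c ∈ x.support)
    (hbmax : ∀ b' ∈ s.support, EOrd A b' ≤ EOrd A b)
    (hcmax : ∀ c' ∈ x.support, EOrd A c' ≤ EOrd A c) :
    coeff (b + c) (s * x) = coeff b s * coeff c x := by
  classical
  rw [coeff_mul]
  apply Finset.sum_eq_single (b, c)
  · rintro ⟨b', c'⟩ hmem hne
    simp only [Finset.HasAntidiagonal.mem_antidiagonal] at hmem
    by_cases hb' : b' ∈ s.support
    · by_cases hc' : c' ∈ x.support
      · exfalso
        have h1 := hbmax b' hb'
        have h2 := hcmax c' hc'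
        have hsum : EOrd A b' + EOrd A c' = EOrd A b + EOrd A c := by
          rw [← EOrd_add, ← EOrd_add, hmem]
        have hb'b : EOrd A b' = EOrd A b := by
          rcases lt_or_eq_of_le h1 with h | h
          · exact absurd hsum (ne_of_lt (add_lt_add_of_lt_of_le h h2))
          · exact h
        have : b' = b := EOrd_injective A hb'b
        subst this
        have : c' = c := add_left_cancel hmem
        exact hne (by rw [this])
      · rw [MvPolynomial.notMem_support_iff.mp hc', mul_zero]
    · rw [MvPolynomial.notMem_support_iff.mp hb', zero_mul]
  · intro h
    simp at h


lemma sat_lemma (A : Set (Fin (n+1))) (S' : Set (ExpF n))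
    (hS' : ∀ a ∈ S', ∀ i, i ∉ A → a i = 0)
    {s : MvPolynomial (Fin (n+1)) k} {b₀ : ExpF n}
    (hb₀ : b₀ ∈ s.support) (hb₀A : ∀ i ∈ A, b₀ i = 0) :
    ∀ x : MvPolynomial (Fin (n+1)) k,
      s * x ∈ Ideal.span ((fun a => (monomial a (1:k) : MvPolynomial (Fin (n+1)) k)) '' S') →
      x ∈ Ideal.span ((fun a => (monomial a (1:k) : MvPolynomial (Fin (n+1)) k)) '' S') := by
  set J := Ideal.span ((fun a => (monomial a (1:k) : MvPolynomial (Fin (n+1)) k)) '' S') with hJ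
  suffices H : ∀ (N : ℕ) (x : MvPolynomial (Fin (n+1)) k),
      x.support.card ≤ N → s * x ∈ J → x ∈ J by
    intro x hx; exact H x.support.card x le_rfl hx
  intro N
  induction N with
  | zero =>
    intro x hx _
    have : x.support = ∅ := Finset.card_eq_zero.mp (Nat.le_zero.mp hx)
    rw [MvPolynomial.support_eq_empty.mp this]
    exact J.zero_mem
  | succ N ih =>
    intro x hx hsx
    by_cases hx0 : x = 0
    · rw [hx0]; exact J.zero_mem
    · have hne : x.support.Nonempty :=
        Finset.nonempty_iff_ne_empty.mpr (fun h => hx0 (MvPolynomial.support_eq_empty.mp h))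
      obtain ⟨c, hc, hcmax⟩ := Finset.exists_max_image x.support (EOrd A) hne
      obtain ⟨b, hb, hbmax⟩ := Finset.exists_max_image s.support (EOrd A) ⟨b₀, hb₀⟩
      have hrb : rA A b = 0 := by
        refine rA_eq_zero_of_EOrd_le (hbmax b₀ hb₀) ?_
        ext i
        by_cases h : i ∈ A <;> simp [rA_apply_mem, rA_apply_not_mem, h, hb₀A]
      have hco : coeff (b + c) (s * x) = coeff b s * coeff c x :=
        coeff_mul_max A s x hb hc hbmax hcmax
      have hmem : b + c ∈ (s * x).support := by
        rw [MvPolynomial.mem_support_iff, hco]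
        exact mul_ne_zero (MvPolynomial.mem_support_iff.mp hb) (MvPolynomial.mem_support_iff.mp hc)
      obtain ⟨a, haS, hale⟩ := MvPolynomial.mem_ideal_span_monomial_image.mp hsx _ hmem
      have halec : a ≤ c := by
        rw [Finsupp.le_def]
        intro i
        by_cases hi : i ∈ A
        · have h1 : a i ≤ b i + c i := by
            have := Finsupp.le_def.mp hale i
            simpa using this
          have hbi : b i = 0 := by
            have h2 : rA A b i = 0 := by rw [hrb]; rfl
            rwa [rA_apply_mem hi] at h2
          omega
        · rw [hS' a haS i hi]; exact Nat.zero_le _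
      have hcx : coeff c x ≠ 0 := MvPolynomial.mem_support_iff.mp hc
      have hterm : (monomial c (coeff c x) : MvPolynomial (Fin (n+1)) k) ∈ J := by
        rw [hJ, MvPolynomial.mem_ideal_span_monomial_image]
        intro d hd
        classical
        rw [MvPolynomial.support_monomial, if_neg hcx] at hd
        exact ⟨a, haS, (Finset.mem_singleton.mp hd) ▸ halec⟩
      set x' := x - monomial c (coeff c x) with hx'
      have hcoeff' : ∀ d, coeff d x' = if c = d then 0 else coeff d x := by
        intro d
        rw [hx', MvPolynomial.coeff_sub, MvPolynomial.coeff_monomial]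
        split <;> rename_i h
        · rw [← h]; ring
        · ring
      have hsupp : x'.support ⊆ x.support.erase c := by
        intro d hd
        rw [MvPolynomial.mem_support_iff, hcoeff' d] at hd
        rw [Finset.mem_erase]
        split at hd
        · exact absurd rfl hd
        · rename_i h
          exact ⟨fun hdc => h hdc.symm, MvPolynomial.mem_support_iff.mpr hd⟩
      have hcard : x'.support.card ≤ N := by
        have h1 := Finset.card_le_card hsupp
        have h2 := Finset.card_erase_of_mem hc
        omega
      have hsx' : s * x' ∈ J := by
        rw [hx', mul_sub]
        exact J.sub_mem hsx (J.mul_mem_left s hterm)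
      have hx'J : x' ∈ J := ih x' hcard hsx'
      have : x = x' + monomial c (coeff c x) := by rw [hx']; ring
      rw [this]
      exact J.add_mem hx'J hterm


-- ### Localization facts

lemma mem_contraction_iff {R : Type*} [CommRing R] [IsDomain R] {P : Ideal R} (hP : P.IsPrime)
    (J : Ideal R) (x : R) :
    x ∈ (Ideal.map (algebraMap R (@Localization.AtPrime R _ P hP)) J).comap
      (algebraMap R (@Localization.AtPrime R _ P hP)) ↔ ∃ s, s ∉ P ∧ s * x ∈ J := by
  letI := hP
  have hinj : Function.Injective (algebraMap R (Localization.AtPrime P)) :=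
    IsLocalization.injective _ P.primeCompl_le_nonZeroDivisors
  rw [Ideal.mem_comap, IsLocalization.mem_map_algebraMap_iff P.primeCompl]
  constructor
  · rintro ⟨⟨⟨a, ha⟩, ⟨s, hs⟩⟩, h⟩
    refine ⟨s, hs, ?_⟩
    have h2 : algebraMap R (Localization.AtPrime P) (x * s) = algebraMap R _ a := by
      rw [map_mul]; exact h
    have h3 := hinj h2
    rw [mul_comm] at h3
    rw [h3]
    exact ha
  · rintro ⟨s, hs, h⟩
    exact ⟨⟨⟨s * x, h⟩, ⟨s, hs⟩⟩, by rw [← map_mul, mul_comm]⟩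

-- ### Sum sets and powers of monomial ideals

open Pointwise in
def sumSet : ℕ → Set (ExpF n) → Set (ExpF n)
  | 0, _ => {0}
  | (m + 1), S => S + sumSet m S

open Pointwise in
lemma image_mono_add (S T : Set (ExpF n)) :
    (fun a => (monomial a (1:k) : MvPolynomial (Fin (n+1)) k)) '' (S + T) =
      ((fun a => (monomial a (1:k) : MvPolynomial (Fin (n+1)) k)) '' S) *
      ((fun a => (monomial a (1:k) : MvPolynomial (Fin (n+1)) k)) '' T) := by
  ext z
  constructor
  · rintro ⟨u, hu, rfl⟩
    rw [Set.mem_add] at hu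
    obtain ⟨a, ha, b, hb, rfl⟩ := hu
    exact ⟨monomial a 1, ⟨a, ha, rfl⟩, monomial b 1, ⟨b, hb, rfl⟩,
      by simp [MvPolynomial.monomial_mul]⟩
  · rintro ⟨u, ⟨a, ha, rfl⟩, v, ⟨b, hb, rfl⟩, rfl⟩
    exact ⟨a + b, Set.add_mem_add ha hb, by simp [MvPolynomial.monomial_mul]⟩

lemma span_mono_pow (S : Set (ExpF n)) (m : ℕ) :
    (Ideal.span ((fun a => (monomial a (1:k) : MvPolynomial (Fin (n+1)) k)) '' S)) ^ m =
      Ideal.span ((fun a => (monomial a (1:k) : MvPolynomial (Fin (n+1)) k)) '' sumSet m S) := by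
  induction m with
  | zero =>
    rw [pow_zero, sumSet, Set.image_singleton]
    have : (monomial (0 : ExpF n) (1:k) : MvPolynomial (Fin (n+1)) k) = 1 := by
      rw [MvPolynomial.monomial_zero']; exact map_one _
    rw [this, Ideal.span_singleton_one, Ideal.one_eq_top]
  | succ m ih =>
    rw [pow_succ', sumSet, image_mono_add, ← Ideal.span_mul_span', ih]

lemma rA_image_add (A : Set (Fin (n+1))) (S T : Set (ExpF n)) :
    rA A '' (S + T) = rA A '' S + rA A '' T := by
  ext u
  constructor
  · rintro ⟨v, hv, rfl⟩
    rw [Set.mem_add] at hv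
    obtain ⟨a, ha, b, hb, rfl⟩ := hv
    rw [rA_add]
    exact Set.add_mem_add ⟨a, ha, rfl⟩ ⟨b, hb, rfl⟩
  · rintro ⟨u', ⟨a, ha, rfl⟩, v', ⟨b, hb, rfl⟩, rfl⟩
    exact ⟨a + b, Set.add_mem_add ha hb, rA_add A a b⟩

lemma rA_image_sumSet (A : Set (Fin (n+1))) (S : Set (ExpF n)) (m : ℕ) :
    rA A '' sumSet m S = sumSet m (rA A '' S) := by
  induction m with
  | zero => rw [sumSet, sumSet, Set.image_singleton, rA_zero]
  | succ m ih => rw [sumSet, sumSet, rA_image_add, ih]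

/-- A monomial span is contained in the span of the `A`-restricted monomials. -/
lemma le_restr (A : Set (Fin (n+1))) (W : Set (ExpF n)) :
    Ideal.span ((fun a => (monomial a (1:k) : MvPolynomial (Fin (n+1)) k)) '' W) ≤
      Ideal.span ((fun a => (monomial a (1:k) : MvPolynomial (Fin (n+1)) k)) '' (rA A '' W)) := by
  rw [Ideal.span_le]
  rintro _ ⟨a, ha, rfl⟩
  rw [SetLike.mem_coe, MvPolynomial.mem_ideal_span_monomial_image]
  intro d hd
  classical
  rw [MvPolynomial.support_monomial, if_neg (one_ne_zero)] at hd
  exact ⟨rA A a, ⟨a, ha, rfl⟩, (Finset.mem_singleton.mp hd) ▸ rA_le A a⟩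

/-- A monomial supported away from the variables of a prime `P` is not in `P`. -/
lemma monomial_not_mem_prime {P : Ideal (MvPolynomial (Fin (n+1)) k)} (hP : P.IsPrime)
    {b : ExpF n} (hb : ∀ i, X (R := k) i ∈ P → b i = 0) :
    (monomial b (1:k) : MvPolynomial (Fin (n+1)) k) ∉ P := by
  intro hmem
  rw [MvPolynomial.monomial_eq, map_one, one_mul] at hmem
  rw [Finsupp.prod] at hmem
  obtain ⟨i, hi, hXi⟩ := (Ideal.IsPrime.prod_mem_iff).mp hmem
  have hbi : b i ≠ 0 := Finsupp.mem_support_iff.mp hi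
  have : X (R := k) i ∈ P := (hP.pow_mem_iff_mem (b i) (Nat.pos_of_ne_zero hbi)).mp hXi
  exact hbi (hb i this)

end

end SymbAux

namespace SymbAux
open Finsupp
noncomputable section
variable {n : ℕ} {k : Type*} [Field k]

lemma mem_contractedPower_iff {R : Type*} [CommRing R] [IsDomain R] (I : Ideal R) (m : ℕ)
    {P : Ideal R} (hP : P.IsPrime) (x : R) :
    x ∈ contractedPower I m P hP ↔ ∃ s, s ∉ P ∧ s * x ∈ I ^ m :=
  mem_contraction_iff hP (I ^ m) x

lemma mem_Qsub_iff {R : Type*} [CommRing R] [IsDomain R] (I : Ideal R)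
    {P : Ideal R} (hP : P.IsPrime) (x : R) :
    x ∈ Qsub I P hP ↔ ∃ s, s ∉ P ∧ s * x ∈ I :=
  mem_contraction_iff hP I x

lemma key (S : Set (ExpF n)) (m : ℕ) (P : Ideal (MvPolynomial (Fin (n+1)) k))
    (hP : P.IsPrime) :
    contractedPower
        (Ideal.span ((fun a => (monomial a (1 : k) : MvPolynomial (Fin (n + 1)) k)) '' S))
        m P hP ≤
      (Qsub (Ideal.span ((fun a => (monomial a (1 : k) : MvPolynomial (Fin (n + 1)) k)) '' S))
        P hP) ^ m := by
  classical
  set A : Set (Fin (n + 1)) := {i | X (R := k) i ∈ P} with hA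
  set I : Ideal (MvPolynomial (Fin (n + 1)) k) :=
    Ideal.span ((fun a => (monomial a (1 : k) : MvPolynomial (Fin (n + 1)) k)) '' S) with hI
  intro x hx
  obtain ⟨s, hsP, hsx⟩ := (mem_contractedPower_iff I m hP x).mp hx
  have hsA : s ∉ Ideal.span (X (R := k) '' A) := by
    intro hmem
    exact hsP (Ideal.span_le.mpr (by rintro _ ⟨i, hi, rfl⟩; exact hi) hmem)
  rw [MvPolynomial.mem_ideal_span_X_image] at hsA
  push_neg at hsA
  obtain ⟨b₀, hb₀, hb₀A⟩ := hsA
  have hb₀A' : ∀ i ∈ A, b₀ i = 0 := hb₀A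
  rw [hI, span_mono_pow] at hsx
  have hsx2 : s * x ∈ Ideal.span
      ((fun a => (monomial a (1 : k) : MvPolynomial (Fin (n + 1)) k)) '' (rA A '' sumSet m S)) :=
    le_restr A _ hsx
  have hS' : ∀ a ∈ rA A '' sumSet m S, ∀ i, i ∉ A → a i = 0 := by
    rintro _ ⟨a', _, rfl⟩ i hi
    exact rA_apply_not_mem hi
  have hxJ := sat_lemma A _ hS' hb₀ hb₀A' x hsx2
  rw [rA_image_sumSet, ← span_mono_pow] at hxJ
  refine SetLike.le_def.mp (Ideal.pow_right_mono ?_ m) hxJ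
  rw [Ideal.span_le]
  rintro _ ⟨a0, ⟨a, ha, rfl⟩, rfl⟩
  rw [SetLike.mem_coe]
  refine (mem_Qsub_iff I hP _).mpr ⟨monomial (a - rA A a) 1, ?_, ?_⟩
  · apply monomial_not_mem_prime hP
    intro i hXi
    have hiA : i ∈ A := hXi
    rw [Finsupp.tsub_apply, rA_apply_mem hiA, Nat.sub_self]
  · rw [MvPolynomial.monomial_mul, one_mul, tsub_add_cancel_of_le (rA_le A a)]
    exact Ideal.subset_span ⟨a, ha, rfl⟩

lemma qsub_pow_le {R : Type*} [CommRing R] (I P : Ideal R) (hP : P.IsPrime) (m : ℕ) :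
    (Qsub I P hP) ^ m ≤ contractedPower I m P hP := by
  letI := hP
  have h1 : (Qsub I P hP) ^ m ≤ Ideal.comap (algebraMap R (Localization.AtPrime P))
      (Ideal.map (algebraMap R (Localization.AtPrime P)) ((Qsub I P hP) ^ m)) :=
    Ideal.le_comap_map
  refine h1.trans ?_
  rw [Ideal.map_pow]
  have h2 : (Ideal.map (algebraMap R (Localization.AtPrime P)) (Qsub I P hP)) ^ m ≤
      (Ideal.map (algebraMap R (Localization.AtPrime P)) I) ^ m :=
    Ideal.pow_right_mono Ideal.map_comap_le m
  refine (Ideal.comap_mono h2).trans ?_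
  rw [← Ideal.map_pow]
  exact le_rfl

lemma contracted_anti {R : Type*} [CommRing R] [IsDomain R] (I : Ideal R) (m : ℕ)
    {P P' : Ideal R} (hP : P.IsPrime) (hP' : P'.IsPrime) (h : P ≤ P') :
    contractedPower I m P' hP' ≤ contractedPower I m P hP := by
  intro x hx
  obtain ⟨s, hs, hsx⟩ := (mem_contractedPower_iff I m hP' x).mp hx
  exact (mem_contractedPower_iff I m hP x).mpr ⟨s, fun c => hs (h c), hsx⟩

lemma exists_le_maxAss {R : Type*} [CommRing R] [IsNoetherianRing R] {I P : Ideal R}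
    (hP : P ∈ associatedPrimes R (R ⧸ I)) : ∃ P' ∈ maxAss I, P ≤ P' := by
  haveI hN : IsNoetherian R R := inferInstance
  have hwf : WellFoundedGT (Submodule R R) := isNoetherian_iff'.mp hN
  have wf : WellFounded ((· > ·) : Ideal R → Ideal R → Prop) := hwf.wf
  obtain ⟨P', ⟨hP', hPP'⟩, hmin⟩ := wf.has_min
    {Q | Q ∈ associatedPrimes R (R ⧸ I) ∧ P ≤ Q} ⟨P, hP, le_rfl⟩
  refine ⟨P', ⟨hP', fun Q hQ hle => ?_⟩, hPP'⟩
  exact (hle.lt_or_eq).resolve_left (hmin Q ⟨hQ, hPP'.trans hle⟩)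

lemma symbolicPower_le {R : Type*} [CommRing R] (I : Ideal R) (m : ℕ) {P : Ideal R}
    (hP : P ∈ associatedPrimes R (R ⧸ I)) :
    symbolicPower I m ≤ contractedPower I m P hP.isPrime :=
  iInf_le _ (⟨P, hP⟩ : {P // P ∈ associatedPrimes R (R ⧸ I)})

lemma iInf_Qsub_le {R : Type*} [CommRing R] (I : Ideal R) (m : ℕ) {P : Ideal R}
    (hP : P ∈ maxAss I) :
    (⨅ P0 : {P0 : Ideal R // P0 ∈ maxAss I}, (Qsub I P0.1 P0.2.1.isPrime) ^ m) ≤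
      (Qsub I P hP.1.isPrime) ^ m :=
  iInf_le _ (⟨P, hP⟩ : {P0 // P0 ∈ maxAss I})

end
end SymbAux
theorem symbolic_power_eq_iInf_Qsub_pow {k : Type*} [Field k] {n : ℕ}
    (I : Ideal (MvPolynomial (Fin (n + 1)) k)) (hmon : IsMonomialIdeal I) (m : ℕ) (hm : 1 ≤ m) :
    symbolicPower I m =
      ⨅ P : {P : Ideal (MvPolynomial (Fin (n + 1)) k) // P ∈ maxAss I},
        (Qsub I P.1 P.2.1.isPrime) ^ m := by
  obtain ⟨S, rfl⟩ := hmon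
  apply le_antisymm
  · apply le_iInf
    rintro ⟨P, hPmem⟩
    exact le_trans (SymbAux.symbolicPower_le _ m hPmem.1) (SymbAux.key S m P hPmem.1.isPrime)
  · apply le_iInf
    rintro ⟨P, hPass⟩
    obtain ⟨P', hP'max, hPP'⟩ := SymbAux.exists_le_maxAss hPass
    refine le_trans (SymbAux.iInf_Qsub_le _ m hP'max) ?_
    refine le_trans (SymbAux.qsub_pow_le _ P' hP'max.1.isPrime m) ?_
    exact SymbAux.contracted_anti _ m hPass.isPrime hP'max.1.isPrime hPP'
end

section
/- Let R = k[x_0,…,x_n] be a polynomial ring over a field k, let 𝔪 = (x_0,…,x_n), and let I ⊆ R be a square-free monomial ideal with big-height e. Then for all positive integers m, t and r, I^{(t(m+e-1)-e+r)} ⊆ 𝔪^{(t-1)(e-1)+r-1} · (I^{(m)})^t. -/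
open MvPolynomial Pointwise

namespace SPAux

open Finset MvPolynomial


section MCL
variable {ι : Type*} [Fintype ι] [DecidableEq ι]

lemma MCL_aux (e t q : ℕ) (ht : 1 ≤ t) (𝓕 : Finset (Finset ι))
    (hcard : ∀ F ∈ 𝓕, F.card ≤ e) :
    ∀ (N : ℕ) (μ : Finset ι → ℕ) (c : ι → ℕ), (∑ F ∈ 𝓕, μ F) ≤ N →
    (∀ F ∈ 𝓕, μ F ≠ 0 → t * μ F + (t - 1) * (e - 1) + q ≤ ∑ i ∈ F, c i) →
    ∃ K : ι → ℕ, (∀ i, t * K i ≤ c i) ∧ (∀ F ∈ 𝓕, μ F ≤ ∑ i ∈ F, K i) ∧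
      ((∀ F ∈ 𝓕, μ F = 0) → K = 0) ∧
      (𝓕.Nonempty → ∃ F' ∈ 𝓕, (∑ i ∈ F', K i) ≤ μ F' ∧
        ((∃ F ∈ 𝓕, 0 < μ F) → 0 < μ F')) := by
  intro N
  induction N with
  | zero =>
    intro μ c hN _
    have hall : ∀ F ∈ 𝓕, μ F = 0 := by
      intro F hF
      have := Finset.single_le_sum (f := μ) (fun _ _ => Nat.zero_le _) hF
      omega
    refine ⟨0, fun i => by simp, fun F hF => by simp [hall F hF], fun _ => rfl, ?_⟩
    rintro ⟨F0, hF0⟩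
    exact ⟨F0, hF0, by simp [hall F0 hF0], fun ⟨F, hF, h0⟩ => absurd (hall F hF) (by omega)⟩
  | succ N ih =>
    intro μ c hN hσ
    by_cases hall : ∀ F ∈ 𝓕, μ F = 0
    · refine ⟨0, fun i => by simp, fun F hF => by simp [hall F hF], fun _ => rfl, ?_⟩
      rintro ⟨F0, hF0⟩
      exact ⟨F0, hF0, by simp [hall F0 hF0], fun ⟨F, hF, h0⟩ => absurd (hall F hF) (by omega)⟩
    push_neg at hall
    obtain ⟨F₁, hF₁, hμF₁⟩ := hall
    -- threshold set
    set T : Finset ι := univ.filter (fun i => t ≤ c i) with hT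
    -- every active F meets T
    have hmeet : ∀ F ∈ 𝓕, μ F ≠ 0 → (F ∩ T).Nonempty := by
      intro F hF hμ
      by_contra hemp
      rw [Finset.not_nonempty_iff_eq_empty] at hemp
      have hlt : ∀ i ∈ F, c i ≤ t - 1 := by
        intro i hi
        have : i ∉ T := by
          intro hiT
          exact absurd (Finset.mem_inter.mpr ⟨hi, hiT⟩) (by simp [hemp])
        simp only [hT, Finset.mem_filter, Finset.mem_univ, true_and, not_le] at this
        omega
      have hsum : ∑ i ∈ F, c i ≤ F.card * (t - 1) :=
        le_trans (Finset.sum_le_sum hlt) (by simp [Finset.sum_const, Nat.mul_comm])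
      have hσF := hσ F hF hμ
      have htμ : t ≤ t * μ F := Nat.le_mul_of_pos_right t (by omega)
      have hcard_e : F.card * (t - 1) ≤ e * (t - 1) :=
        Nat.mul_le_mul_right _ (hcard F hF)
      have hee : e * (t - 1) ≤ (t - 1) * (e - 1) + (t - 1) := by
        cases e with
        | zero => simp
        | succ e' =>
          rw [Nat.succ_sub_one, Nat.succ_mul, Nat.mul_comm]
      omega
    -- choose a minimal "partial cover" C ⊆ T
    have h𝒞ne : (univ.powerset.filter (fun C : Finset ι =>
        C ⊆ T ∧ ∀ F ∈ 𝓕, μ F ≠ 0 → (F ∩ C).Nonempty)).Nonempty := by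
      refine ⟨T, ?_⟩
      simp only [Finset.mem_filter, Finset.mem_powerset]
      exact ⟨Finset.subset_univ _, Subset.rfl, fun F hF hμ => by
        simpa [Finset.inter_self] using hmeet F hF hμ⟩
    obtain ⟨C, hCmem, hCmin⟩ := Finset.exists_min_image _ Finset.card h𝒞ne
    simp only [Finset.mem_filter, Finset.mem_powerset] at hCmem
    obtain ⟨-, hCT, hCcov⟩ := hCmem
    -- private sets
    have hpriv : ∀ i ∈ C, ∃ F ∈ 𝓕, μ F ≠ 0 ∧ F ∩ C = {i} := by
      intro i hi
      have herase : ¬ (C.erase i ⊆ T ∧ ∀ F ∈ 𝓕, μ F ≠ 0 → (F ∩ C.erase i).Nonempty) := by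
        intro h
        have h1 := hCmin (C.erase i) (by
          simp only [Finset.mem_filter, Finset.mem_powerset]
          exact ⟨Finset.subset_univ _, h⟩)
        have h2 := Finset.card_erase_lt_of_mem hi
        omega
      have hsub : C.erase i ⊆ T := (Finset.erase_subset _ _).trans hCT
      push_neg at herase
      obtain ⟨F, hF, hμ, hne⟩ := herase hsub
      refine ⟨F, hF, hμ, ?_⟩
      have h1 : F ∩ C ⊆ {i} := by
        intro j hj
        simp only [Finset.mem_inter] at hj
        simp only [Finset.mem_singleton]
        by_contra hji
        have : j ∈ F ∩ C.erase i := by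
          simp [Finset.mem_inter, Finset.mem_erase, hji, hj.1, hj.2]
        simp [hne] at this
      have h2 : (F ∩ C).Nonempty := hCcov F hF hμ
      exact (Finset.Nonempty.subset_singleton_iff h2).mp h1
    -- recurse
    set μ' : Finset ι → ℕ := fun F => μ F - (F ∩ C).card with hμ'
    set c' : ι → ℕ := fun i => if i ∈ C then c i - t else c i with hc'
    have hct : ∀ i ∈ C, t ≤ c i := by
      intro i hi
      have := hCT hi
      simpa [hT] using this
    have hsplit : ∀ F : Finset ι, ∑ i ∈ F, c i = (∑ i ∈ F, c' i) + t * (F ∩ C).card := by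
      intro F
      have hpt : ∀ i ∈ F, c i = c' i + (if i ∈ C then t else 0) := by
        intro i _
        by_cases hiC : i ∈ C
        · have := hct i hiC
          simp only [hc', hiC, if_pos]
          omega
        · simp [hc', hiC]
      rw [Finset.sum_congr rfl hpt, Finset.sum_add_distrib]
      congr 1
      rw [Finset.sum_ite_mem, Finset.sum_const, smul_eq_mul, Nat.mul_comm]
    have hσ' : ∀ F ∈ 𝓕, μ' F ≠ 0 → t * μ' F + (t - 1) * (e - 1) + q ≤ ∑ i ∈ F, c' i := by
      intro F hF hμ'F
      have hact : μ F ≠ 0 := by simp only [hμ'] at hμ'F; omega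
      have h1 := hσ F hF hact
      have h2 := hsplit F
      have h3 : μ F = μ' F + (F ∩ C).card := by
        simp only [hμ'] at hμ'F ⊢
        omega
      have h4 : t * μ F = t * μ' F + t * (F ∩ C).card := by
        rw [h3, Nat.mul_add]
      omega
    have hNmeas : (∑ F ∈ 𝓕, μ' F) ≤ N := by
      have hstrict : (∑ F ∈ 𝓕, μ' F) < ∑ F ∈ 𝓕, μ F := by
        refine Finset.sum_lt_sum (fun F hF => by simp only [hμ']; omega) ⟨F₁, hF₁, ?_⟩
        have hpos := Finset.card_pos.mpr (hCcov F₁ hF₁ hμF₁)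
        simp only [hμ']
        omega
      omega
    obtain ⟨K', hK1, hK2, hK3, hK4⟩ := ih μ' c' hNmeas hσ'
    set K : ι → ℕ := fun i => K' i + (if i ∈ C then 1 else 0) with hK
    have hsplitK : ∀ F : Finset ι, ∑ i ∈ F, K i = (∑ i ∈ F, K' i) + (F ∩ C).card := by
      intro F
      simp only [hK]
      rw [Finset.sum_add_distrib]
      congr 1
      rw [Finset.sum_ite_mem, Finset.sum_const, smul_eq_mul, Nat.mul_one]
    refine ⟨K, ?_, ?_, ?_, ?_⟩
    · intro i
      have h5 := hK1 i
      by_cases hiC : i ∈ C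
      · have h6 := hct i hiC
        have hc'i : c' i = c i - t := by simp [hc', hiC]
        have hKi : K i = K' i + 1 := by simp [hK, hiC]
        rw [hKi, Nat.mul_add]
        omega
      · have hc'i : c' i = c i := by simp [hc', hiC]
        have hKi : K i = K' i := by simp [hK, hiC]
        rw [hKi]
        omega
    · intro F hF
      rw [hsplitK F]
      have h7 := hK2 F hF
      simp only [hμ'] at h7
      omega
    · intro h
      exact absurd (h F₁ hF₁) hμF₁
    · intro _
      by_cases hex : ∃ F ∈ 𝓕, 0 < μ' F
      · obtain ⟨F'', hF'', hsum, hpos⟩ := hK4 ⟨F₁, hF₁⟩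
        have h0 := hpos hex
        refine ⟨F'', hF'', ?_, fun _ => ?_⟩
        · rw [hsplitK F'']
          simp only [hμ'] at h0 hsum
          omega
        · simp only [hμ'] at h0
          omega
      · push_neg at hex
        have hK'0 : K' = 0 := hK3 (fun F hF => by have := hex F hF; omega)
        obtain ⟨i₀, hi₀⟩ := hCcov F₁ hF₁ hμF₁
        have hi₀C : i₀ ∈ C := (Finset.mem_inter.mp hi₀).2
        obtain ⟨Fp, hFp, hμFp, hFpC⟩ := hpriv i₀ hi₀C
        refine ⟨Fp, hFp, ?_, fun _ => by omega⟩
        rw [hsplitK Fp, hFpC, hK'0]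
        simp only [Pi.zero_apply, Finset.sum_const_zero, Finset.card_singleton, Nat.zero_add]
        omega

end MCL


variable {k : Type*} [Field k] {n : ℕ}

/-- weight of a monomial exponent on a face `F` -/
def sig (F : Finset (Fin (n + 1))) (b : Fin (n + 1) →₀ ℕ) : ℕ := ∑ i ∈ F, b i

lemma sig_add (F : Finset (Fin (n + 1))) (b₁ b₂ : Fin (n + 1) →₀ ℕ) :
    sig F (b₁ + b₂) = sig F b₁ + sig F b₂ := by
  simp [sig, Finset.sum_add_distrib]

lemma sig_single (F : Finset (Fin (n + 1))) (i : Fin (n + 1)) :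
    sig F (Finsupp.single i 1) = if i ∈ F then 1 else 0 := by
  simp [sig, Finsupp.single_apply, Finset.sum_ite_eq' F i (fun _ => 1)]

/-- the face (prime) ideal generated by the variables in `F` -/
noncomputable def faceId (F : Finset (Fin (n + 1))) : Ideal (MvPolynomial (Fin (n + 1)) k) :=
  Ideal.span ((fun i => (X i : MvPolynomial (Fin (n + 1)) k)) '' ↑F)

/-- the ideal of polynomials all of whose monomials have `F`-weight at least `d` -/
def sigIdeal (F : Finset (Fin (n + 1))) (d : ℕ) : Ideal (MvPolynomial (Fin (n + 1)) k) where
  carrier := {f | ∀ b ∈ f.support, d ≤ sig F b}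
  zero_mem' := by simp
  add_mem' := by
    intro f g hf hg b hb
    rcases Finset.mem_union.mp (MvPolynomial.support_add hb) with h | h
    exacts [hf b h, hg b h]
  smul_mem' := by
    intro a f hf b hb
    rw [smul_eq_mul] at hb
    obtain ⟨b₁, hb₁, b₂, hb₂, rfl⟩ := Finset.mem_add.mp (MvPolynomial.support_mul a f hb)
    rw [sig_add]
    exact le_add_of_le_right (hf b₂ hb₂)

lemma monomial_sub_single {b : Fin (n + 1) →₀ ℕ} {i : Fin (n + 1)} (hi : b i ≠ 0) :
    Finsupp.single i 1 + (b - Finsupp.single i 1) = b := by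
  ext j
  simp only [Finsupp.add_apply, Finsupp.tsub_apply, Finsupp.single_apply]
  by_cases h : i = j
  · subst h
    simp only [eq_self_iff_true, if_true]
    omega
  · simp [h]

lemma monomial_mem_faceId_pow {F : Finset (Fin (n + 1))} {d : ℕ} {b : Fin (n + 1) →₀ ℕ}
    (r : k) (h : d ≤ sig F b) : monomial b r ∈ (faceId F (k := k) (n := n)) ^ d := by
  induction d generalizing b with
  | zero => simp
  | succ d ih =>
    have hex : ∃ i ∈ F, b i ≠ 0 := by
      by_contra hc
      push_neg at hc
      have : sig F b = 0 := Finset.sum_eq_zero (fun i hi => hc i hi)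
      omega
    obtain ⟨i, hiF, hbi⟩ := hex
    have hsig' : d ≤ sig F (b - Finsupp.single i 1) := by
      have := sig_add F (Finsupp.single i 1) (b - Finsupp.single i 1)
      rw [monomial_sub_single hbi] at this
      rw [sig_single, if_pos hiF] at this
      omega
    have hXi : (X i : MvPolynomial (Fin (n + 1)) k) ∈ faceId F :=
      Ideal.subset_span ⟨i, by simpa using hiF, rfl⟩
    have : monomial b r = X i * monomial (b - Finsupp.single i 1) r := by
      rw [X, monomial_mul, one_mul, monomial_sub_single hbi]
    rw [this, pow_succ, mul_comm ((faceId F) ^ d) (faceId F)]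
    exact Ideal.mul_mem_mul hXi (ih hsig')

lemma faceId_le_sigIdeal_one (F : Finset (Fin (n + 1))) :
    faceId F (k := k) (n := n) ≤ sigIdeal F 1 := by
  rw [faceId, Ideal.span_le]
  rintro _ ⟨i, hi, rfl⟩
  rw [SetLike.mem_coe]
  intro b hb
  rw [MvPolynomial.support_X (R := k), Finset.mem_singleton] at hb
  subst hb
  rw [sig_single, if_pos (by simpa using hi)]

lemma faceId_pow_le_sigIdeal (F : Finset (Fin (n + 1))) (d : ℕ) :
    (faceId F (k := k) (n := n)) ^ d ≤ sigIdeal F d := by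
  induction d with
  | zero => intro f _ b _; exact Nat.zero_le _
  | succ d ih =>
    rw [pow_succ]
    refine Ideal.mul_le.mpr (fun f hf g hg => ?_)
    intro b hb
    obtain ⟨b₁, hb₁, b₂, hb₂, rfl⟩ := Finset.mem_add.mp (MvPolynomial.support_mul f g hb)
    rw [sig_add]
    have h1 : d ≤ sig F b₁ := ih hf b₁ hb₁
    have h2 : 1 ≤ sig F b₂ := faceId_le_sigIdeal_one F hg b₂ hb₂
    omega

lemma mem_faceId_pow_iff {F : Finset (Fin (n + 1))} {d : ℕ}
    {f : MvPolynomial (Fin (n + 1)) k} :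
    f ∈ (faceId F (k := k) (n := n)) ^ d ↔ ∀ b ∈ f.support, d ≤ sig F b := by
  constructor
  · exact fun h => faceId_pow_le_sigIdeal F d h
  · intro h
    rw [MvPolynomial.as_sum f]
    exact Submodule.sum_mem _ (fun b hb => monomial_mem_faceId_pow _ (h b hb))

lemma mem_faceId_iff {F : Finset (Fin (n + 1))} {f : MvPolynomial (Fin (n + 1)) k} :
    f ∈ (faceId F (k := k) (n := n)) ↔ ∀ b ∈ f.support, 1 ≤ sig F b := by
  rw [← pow_one (faceId F (k := k) (n := n))]
  exact mem_faceId_pow_iff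

lemma X_mem_faceId_iff {F : Finset (Fin (n + 1))} {i : Fin (n + 1)} :
    (X i : MvPolynomial (Fin (n + 1)) k) ∈ faceId F ↔ i ∈ F := by
  constructor
  · intro h
    have := mem_faceId_iff.mp h (Finsupp.single i 1) (by
      rw [MvPolynomial.support_X (R := k)]; simp)
    rw [sig_single] at this
    by_contra hc
    rw [if_neg hc] at this
    omega
  · intro h
    exact Ideal.subset_span ⟨i, by simpa using h, rfl⟩

lemma faceId_le_iff {F G : Finset (Fin (n + 1))} :
    faceId F (k := k) (n := n) ≤ faceId G ↔ F ⊆ G := by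
  constructor
  · intro h i hi
    exact X_mem_faceId_iff.mp (h (X_mem_faceId_iff.mpr hi))
  · intro h
    exact Ideal.span_mono (Set.image_mono (by exact_mod_cast h))

/-- the "kill the variables in F" algebra map -/
noncomputable def phiF (F : Finset (Fin (n + 1))) :
    MvPolynomial (Fin (n + 1)) k →ₐ[k] MvPolynomial (Fin (n + 1)) k :=
  aeval (fun i => if i ∈ F then 0 else X i)

lemma phiF_monomial_sig_zero {F : Finset (Fin (n + 1))} {b : Fin (n + 1) →₀ ℕ}
    (r : k) (h : sig F b = 0) : phiF F (monomial b r) = monomial b r := by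
  rw [phiF, aeval_monomial, monomial_eq]
  congr 1
  rw [Finsupp.prod, Finsupp.prod]
  refine Finset.prod_congr rfl (fun i hi => ?_)
  have hiF : i ∉ F := by
    intro hiF
    have h1 : b i ≠ 0 := by simpa using hi
    have h2 : b i ≤ sig F b := Finset.single_le_sum (f := fun j => b j)
      (fun _ _ => Nat.zero_le _) hiF
    omega
  rw [if_neg hiF]

lemma phiF_monomial_sig_pos {F : Finset (Fin (n + 1))} {b : Fin (n + 1) →₀ ℕ}
    (r : k) (h : 1 ≤ sig F b) : phiF F (monomial b r) = 0 := by
  rw [phiF, aeval_monomial]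
  have hex : ∃ i ∈ F, b i ≠ 0 := by
    by_contra hc
    push_neg at hc
    have : sig F b = 0 := Finset.sum_eq_zero (fun i hi => hc i hi)
    omega
  obtain ⟨i, hiF, hbi⟩ := hex
  have : (b.prod fun j e => (if j ∈ F then 0 else (X j : MvPolynomial (Fin (n + 1)) k)) ^ e) = 0 := by
    rw [Finsupp.prod]
    refine Finset.prod_eq_zero (Finsupp.mem_support_iff.mpr hbi) ?_
    rw [if_pos hiF]
    exact zero_pow hbi
  rw [this, mul_zero]

lemma faceId_eq_ker (F : Finset (Fin (n + 1))) :
    faceId F (k := k) (n := n) = RingHom.ker (phiF F (k := k) (n := n)) := by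
  apply le_antisymm
  · rw [faceId, Ideal.span_le]
    rintro _ ⟨i, hi, rfl⟩
    have : phiF F (X i : MvPolynomial (Fin (n + 1)) k) = 0 := by
      rw [phiF, aeval_X, if_pos (by simpa using hi)]
    simpa [RingHom.mem_ker] using this
  · intro f hf
    rw [RingHom.mem_ker] at hf
    have key : f - phiF F f ∈ faceId F (k := k) (n := n) := by
      have hrw : f - phiF F f =
          ∑ b ∈ f.support, (monomial b (coeff b f) - phiF F (monomial b (coeff b f))) := by
        rw [Finset.sum_sub_distrib, ← map_sum, ← MvPolynomial.as_sum f]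
      rw [hrw]
      refine Submodule.sum_mem _ (fun b hb => ?_)
      rcases Nat.eq_zero_or_pos (sig F b) with h0 | hpos
      · rw [phiF_monomial_sig_zero _ h0, sub_self]
        exact Submodule.zero_mem _
      · rw [phiF_monomial_sig_pos _ hpos, sub_zero]
        have := monomial_mem_faceId_pow (F := F) (coeff b f) hpos
        rwa [pow_one] at this
    rwa [hf, sub_zero] at key

lemma faceId_isPrime (F : Finset (Fin (n + 1))) :
    (faceId F (k := k) (n := n)).IsPrime := by
  rw [faceId_eq_ker]
  exact RingHom.ker_isPrime _


lemma faceId_pow_primary {F : Finset (Fin (n + 1))} {d : ℕ}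
    {s f : MvPolynomial (Fin (n + 1)) k}
    (hs : s ∉ faceId F (k := k) (n := n)) (h : s * f ∈ (faceId F (k := k) (n := n)) ^ d) :
    f ∈ (faceId F (k := k) (n := n)) ^ d := by
  rw [mem_faceId_pow_iff] at h ⊢
  by_contra hc
  push_neg at hc
  obtain ⟨a₀, ha₀mem, ha₀⟩ := hc
  rw [mem_faceId_iff] at hs
  push_neg at hs
  obtain ⟨b₀, hb₀mem, hb₀⟩ := hs
  have hfne : f.support.Nonempty := ⟨a₀, ha₀mem⟩
  set dmin := (f.support.image (sig F)).min' (hfne.image _) with hdmin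
  have hdmin_le : ∀ a ∈ f.support, dmin ≤ sig F a := fun a ha =>
    Finset.min'_le _ _ (Finset.mem_image_of_mem _ ha)
  have hdmin_lt : dmin < d := lt_of_le_of_lt (hdmin_le a₀ ha₀mem) (by omega)
  have hmin_mem : ∃ a ∈ f.support, sig F a = dmin := by
    have := (f.support.image (sig F)).min'_mem (hfne.image _)
    rwa [Finset.mem_image] at this
  obtain ⟨a₁, ha₁, ha₁d⟩ := hmin_mem
  classical
  set Af := f.support.filter (fun a => sig F a = dmin) with hAfdef
  have hAfne : Af.Nonempty := ⟨a₁, Finset.mem_filter.mpr ⟨ha₁, ha₁d⟩⟩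
  set Bs := s.support.filter (fun b => sig F b = 0) with hBsdef
  have hBsne : Bs.Nonempty := ⟨b₀, Finset.mem_filter.mpr ⟨hb₀mem, by omega⟩⟩
  obtain ⟨astar, hastar, hamax⟩ := Finset.exists_max_image Af (fun a => toLex a) hAfne
  obtain ⟨bstar, hbstar, hbmax⟩ := Finset.exists_max_image Bs (fun b => toLex b) hBsne
  rw [hAfdef, Finset.mem_filter] at hastar
  rw [hBsdef, Finset.mem_filter] at hbstar
  have htoLexadd : ∀ u v : Fin (n + 1) →₀ ℕ, toLex (u + v) = toLex u + toLex v :=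
    fun _ _ => rfl
  have hcoeff : coeff (astar + bstar) (s * f) = coeff bstar s * coeff astar f := by
    rw [MvPolynomial.coeff_mul]
    refine Finset.sum_eq_single_of_mem (bstar, astar)
      (Finset.HasAntidiagonal.mem_antidiagonal.mpr (add_comm bstar astar)) ?_
    rintro ⟨x, y⟩ hxy hne
    rw [Finset.HasAntidiagonal.mem_antidiagonal] at hxy
    by_cases hx : x ∈ s.support
    · by_cases hy : y ∈ f.support
      · have hw : sig F x + sig F y = dmin := by
          have : sig F (x + y) = sig F (astar + bstar) := by rw [hxy]
          rw [sig_add, sig_add, hastar.2, hbstar.2, Nat.add_zero] at this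
          omega
        have hy_ge : dmin ≤ sig F y := hdmin_le y hy
        have hx0 : sig F x = 0 := by omega
        have hyd : sig F y = dmin := by omega
        have hxB : x ∈ Bs := Finset.mem_filter.mpr ⟨hx, hx0⟩
        have hyA : y ∈ Af := Finset.mem_filter.mpr ⟨hy, hyd⟩
        have hxle : toLex x ≤ toLex bstar := hbmax x hxB
        have hyle : toLex y ≤ toLex astar := hamax y hyA
        have hxeq : x = bstar := by
          by_contra hxne
          have hlt : toLex x < toLex bstar :=
            lt_of_le_of_ne hxle (fun hh => hxne (toLex.injective hh))
          have h2 : toLex x + toLex y < toLex bstar + toLex astar :=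
            add_lt_add_of_lt_of_le hlt hyle
          rw [← htoLexadd, ← htoLexadd, hxy] at h2
          rw [add_comm astar bstar] at h2
          exact lt_irrefl _ h2
        have hxy' : x + y = astar + bstar := hxy
        have hyeq : y = astar := by
          have hyy : bstar + y = bstar + astar := by
            calc bstar + y = x + y := by rw [hxeq]
              _ = astar + bstar := hxy'
              _ = bstar + astar := add_comm _ _
          exact add_left_cancel hyy
        exact absurd (by rw [hxeq, hyeq] : (x, y) = (bstar, astar)) hne
      · rw [MvPolynomial.notMem_support_iff.mp hy, mul_zero]
    · rw [MvPolynomial.notMem_support_iff.mp hx, zero_mul]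
  have hne0 : coeff (astar + bstar) (s * f) ≠ 0 := by
    rw [hcoeff]
    exact mul_ne_zero (MvPolynomial.mem_support_iff.mp hbstar.1)
      (MvPolynomial.mem_support_iff.mp hastar.1)
  have hd := h (astar + bstar) (MvPolynomial.mem_support_iff.mpr hne0)
  rw [sig_add, hastar.2, hbstar.2] at hd
  omega

section CoversAndAss

variable {S : Set (Fin (n + 1) →₀ ℕ)} {I : Ideal (MvPolynomial (Fin (n + 1)) k)}

/-- `F` is a vertex cover of the generators -/
def IsCover (S : Set (Fin (n + 1) →₀ ℕ)) (F : Finset (Fin (n + 1))) : Prop :=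
  ∀ a ∈ S, ∃ i ∈ F, a i ≠ 0

lemma sig_pos_iff {F : Finset (Fin (n + 1))} {a : Fin (n + 1) →₀ ℕ} :
    1 ≤ sig F a ↔ ∃ i ∈ F, a i ≠ 0 := by
  constructor
  · intro h
    by_contra hc
    push_neg at hc
    have : sig F a = 0 := Finset.sum_eq_zero (fun i hi => hc i hi)
    omega
  · rintro ⟨i, hiF, hai⟩
    have : a i ≤ sig F a := Finset.single_le_sum (f := fun j => a j)
      (fun _ _ => Nat.zero_le _) hiF
    omega

lemma pow_le_pow_ideal {A : Type*} [CommRing A] {I J : Ideal A} (h : I ≤ J) (N : ℕ) :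
    I ^ N ≤ J ^ N := by
  induction N with
  | zero => simp
  | succ N ih =>
    rw [pow_succ, pow_succ]
    exact Ideal.mul_mono ih h

lemma le_faceId_iff
    (hspan : I = Ideal.span
      ((fun a => (monomial a (1 : k) : MvPolynomial (Fin (n + 1)) k)) '' S))
    {F : Finset (Fin (n + 1))} :
    I ≤ faceId F ↔ IsCover S F := by
  constructor
  · intro h a ha
    have hmem : (monomial a (1 : k) : MvPolynomial (Fin (n + 1)) k) ∈ I := by
      rw [hspan]
      exact Ideal.subset_span ⟨a, ha, rfl⟩
    have := mem_faceId_iff.mp (h hmem) a (by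
      simp [MvPolynomial.support_monomial])
    exact sig_pos_iff.mp this
  · intro h
    rw [hspan, Ideal.span_le]
    rintro _ ⟨a, ha, rfl⟩
    rw [SetLike.mem_coe, mem_faceId_iff]
    intro b hb
    simp [MvPolynomial.support_monomial] at hb
    subst hb
    exact sig_pos_iff.mpr (h a ha)

lemma mem_I_of_covers (hsq : ∀ a ∈ S, ∀ i, a i ≤ 1)
    (hspan : I = Ideal.span
      ((fun a => (monomial a (1 : k) : MvPolynomial (Fin (n + 1)) k)) '' S))
    {f : MvPolynomial (Fin (n + 1)) k}
    (hf : ∀ F : Finset (Fin (n + 1)), IsCover S F → f ∈ faceId F) : f ∈ I := by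
  classical
  rw [MvPolynomial.as_sum f]
  refine Submodule.sum_mem _ (fun b hb => ?_)
  have hcond : ∀ F : Finset (Fin (n + 1)), IsCover S F → 1 ≤ sig F b :=
    fun F hF => mem_faceId_iff.mp (hf F hF) b hb
  have hexa : ∃ a ∈ S, ∀ i, a i ≤ b i := by
    by_contra hc
    push_neg at hc
    have hcov : IsCover S (Finset.univ.filter (fun i => b i = 0)) := by
      intro a ha
      obtain ⟨i, hi⟩ := hc a ha
      refine ⟨i, ?_, ?_⟩
      · have := hsq a ha i
        rw [Finset.mem_filter]
        exact ⟨Finset.mem_univ _, by omega⟩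
      · have := hsq a ha i
        omega
    have h1 := hcond _ hcov
    have h0 : sig (Finset.univ.filter (fun i => b i = 0)) b = 0 := by
      refine Finset.sum_eq_zero (fun i hi => ?_)
      rw [Finset.mem_filter] at hi
      exact hi.2
    omega
  obtain ⟨a, haS, hab⟩ := hexa
  have hle : a ≤ b := Finsupp.le_def.mpr hab
  have hsplit : (monomial b (coeff b f) : MvPolynomial (Fin (n + 1)) k) =
      monomial a 1 * monomial (b - a) (coeff b f) := by
    rw [monomial_mul, one_mul, add_tsub_cancel_of_le hle]
  rw [hsplit]
  refine Ideal.mul_mem_right _ _ ?_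
  rw [hspan]
  exact Ideal.subset_span ⟨a, haS, rfl⟩

lemma ass_colon {A : Type*} [CommRing A] [IsNoetherianRing A] {I P : Ideal A}
    (h : P ∈ associatedPrimes A (A ⧸ I)) :
    ∃ f : A, f ∉ I ∧ ∀ r : A, r ∈ P ↔ r * f ∈ I := by
  obtain ⟨hprime, x, hx⟩ := isAssociatedPrime_iff.mp h
  obtain ⟨f, rfl⟩ := Ideal.Quotient.mk_surjective x
  refine ⟨f, ?_, ?_⟩
  · intro hfI
    have h0 : (Ideal.Quotient.mk I) f = 0 := (Ideal.Quotient.eq_zero_iff_mem).mpr hfI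
    apply hprime.ne_top
    rw [Ideal.eq_top_iff_one, hx, Submodule.mem_colon_singleton, h0, smul_zero]
    exact Submodule.zero_mem _
  · intro r
    rw [hx, Submodule.mem_colon_singleton, Submodule.mem_bot]
    have hsmul : r • (Ideal.Quotient.mk I f) = Ideal.Quotient.mk I (r * f) := rfl
    rw [hsmul, Ideal.Quotient.eq_zero_iff_mem]

lemma ass_structure (hsq : ∀ a ∈ S, ∀ i, a i ≤ 1)
    (hspan : I = Ideal.span
      ((fun a => (monomial a (1 : k) : MvPolynomial (Fin (n + 1)) k)) '' S))
    {P : Ideal (MvPolynomial (Fin (n + 1)) k)}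
    (hP : P ∈ associatedPrimes (MvPolynomial (Fin (n + 1)) k)
      (MvPolynomial (Fin (n + 1)) k ⧸ I)) :
    ∃ F : Finset (Fin (n + 1)), P = faceId F ∧ IsCover S F ∧
      ∀ F' ⊆ F, IsCover S F' → F' = F := by
  classical
  obtain ⟨f, hfI, hfP⟩ := ass_colon hP
  set T : Finset (Finset (Fin (n + 1))) :=
    Finset.univ.filter (fun F => IsCover S F ∧ f ∉ faceId F (k := k) (n := n)) with hT
  have hmemT : ∀ F, F ∈ T ↔ (IsCover S F ∧ f ∉ faceId F (k := k) (n := n)) := by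
    intro F
    rw [hT, Finset.mem_filter]
    simp
  have hPinf : P = T.inf (fun F => faceId F (k := k) (n := n)) := by
    ext r
    rw [Submodule.mem_finsetInf]
    constructor
    · intro hr F hF
      rw [hmemT] at hF
      have h1 : r * f ∈ I := (hfP r).mp hr
      have h2 : r * f ∈ faceId F (k := k) (n := n) :=
        (le_faceId_iff hspan).mpr hF.1 h1
      exact ((faceId_isPrime F).mem_or_mem h2).resolve_right hF.2
    · intro hr
      rw [hfP r]
      refine mem_I_of_covers hsq hspan (fun F hF => ?_)
      by_cases hfF : f ∈ faceId F (k := k) (n := n)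
      · exact Ideal.mul_mem_left _ r hfF
      · exact Ideal.mul_mem_right f _ (hr F ((hmemT F).mpr ⟨hF, hfF⟩))
  obtain ⟨F, hFT, hFle⟩ := (hP.isPrime.inf_le' (s := T)
    (f := fun F => faceId F (k := k) (n := n))).mp (le_of_eq hPinf.symm)
  have hPF : P = faceId F (k := k) (n := n) := by
    refine le_antisymm ?_ hFle
    rw [hPinf]
    exact Finset.inf_le hFT
  rw [hmemT] at hFT
  refine ⟨F, hPF, hFT.1, fun F' hF'sub hF'cov => ?_⟩
  have hfF' : f ∉ faceId F' (k := k) (n := n) := by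
    intro hmem
    exact hFT.2 (faceId_le_iff.mpr hF'sub hmem)
  have hF'T : F' ∈ T := (hmemT F').mpr ⟨hF'cov, hfF'⟩
  have h1 : faceId F (k := k) (n := n) ≤ faceId F' := by
    rw [← hPF, hPinf]
    exact Finset.inf_le hF'T
  exact Finset.Subset.antisymm hF'sub (faceId_le_iff.mp h1)

end CoversAndAss

section Heights

lemma exists_face_ltseries (F : Finset (Fin (n + 1))) :
    ∃ p : LTSeries (PrimeSpectrum (MvPolynomial (Fin (n + 1)) k)),
      p.length = F.card ∧ p.last = ⟨faceId F, faceId_isPrime F⟩ := by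
  classical
  induction F using Finset.cons_induction with
  | empty =>
    exact ⟨RelSeries.singleton _ _, rfl, rfl⟩
  | cons i F hi ih =>
    obtain ⟨p, hlen, hlast⟩ := ih
    have hlt : (⟨faceId F, faceId_isPrime F⟩ : PrimeSpectrum (MvPolynomial (Fin (n + 1)) k)) <
        ⟨faceId (Finset.cons i F hi), faceId_isPrime _⟩ := by
      rw [← PrimeSpectrum.asIdeal_lt_asIdeal]
      show faceId F (k := k) (n := n) < faceId (Finset.cons i F hi)
      refine lt_of_le_of_ne (faceId_le_iff.mpr (Finset.subset_cons hi)) ?_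
      intro heq
      have : (X i : MvPolynomial (Fin (n + 1)) k) ∈ faceId F := by
        rw [heq]
        exact X_mem_faceId_iff.mpr (Finset.mem_cons_self i F)
      exact hi (X_mem_faceId_iff.mp this)
    refine ⟨p.snoc _ (hlast ▸ hlt), ?_, ?_⟩
    · rw [RelSeries.snoc_length, hlen, Finset.card_cons]
    · rw [RelSeries.last_snoc]

lemma card_le_of_height_le {F : Finset (Fin (n + 1))} {e : ℕ}
    (h : Order.height (⟨faceId F (k := k) (n := n), faceId_isPrime F⟩ :
      PrimeSpectrum (MvPolynomial (Fin (n + 1)) k)) ≤ (e : ℕ∞)) :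
    F.card ≤ e := by
  obtain ⟨p, hlen, hlast⟩ := exists_face_ltseries (k := k) F
  have h1 := Order.length_le_height_last (p := p)
  rw [hlast, hlen] at h1
  have h2 := le_trans h1 h
  exact_mod_cast h2

end Heights

section Loc

lemma mem_contractedPower_iff {A : Type*} [CommRing A] (I : Ideal A) (m : ℕ) (P : Ideal A)
    (hP : P.IsPrime) (f : A) :
    f ∈ contractedPower I m P hP ↔ ∃ s, s ∉ P ∧ s * f ∈ I ^ m := by
  haveI := hP
  have hdef : contractedPower I m P hP =
      (Ideal.map (algebraMap A (Localization.AtPrime P)) (I ^ m)).comap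
        (algebraMap A (Localization.AtPrime P)) := rfl
  rw [hdef, Ideal.mem_comap,
    ← IsLocalization.mk'_one (M := P.primeCompl) (Localization.AtPrime P) f,
    IsLocalization.mk'_mem_map_algebraMap_iff P.primeCompl]
  constructor
  · rintro ⟨s, hs, hmul⟩
    exact ⟨s, hs, hmul⟩
  · rintro ⟨s, hs, hmul⟩
    exact ⟨s, hs, hmul⟩

end Loc

section PowWitness

variable {S : Set (Fin (n + 1) →₀ ℕ)} {I : Ideal (MvPolynomial (Fin (n + 1)) k)}

lemma pow_witness (hsq : ∀ a ∈ S, ∀ i, a i ≤ 1)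
    (hspan : I = Ideal.span
      ((fun a => (monomial a (1 : k) : MvPolynomial (Fin (n + 1)) k)) '' S))
    {F : Finset (Fin (n + 1))} (hcov : IsCover S F)
    (hmin : ∀ F' ⊆ F, IsCover S F' → F' = F) :
    ∀ (m : ℕ) (K : Fin (n + 1) →₀ ℕ), m ≤ sig F K →
    ∃ D : Fin (n + 1) →₀ ℕ, monomial D (1 : k) ∈ I ^ m ∧
      ∀ j, D j ≤ K j + (if j ∈ F then 0 else m) := by
  intro m
  induction m with
  | zero =>
    intro K _
    refine ⟨0, ?_, fun j => by simp⟩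
    rw [pow_zero, Ideal.one_eq_top]
    exact Submodule.mem_top
  | succ m ih =>
    intro K hK
    have h1 : 1 ≤ sig F K := by omega
    obtain ⟨i, hiF, hKi⟩ := sig_pos_iff.mp h1
    have hne : F.erase i ≠ F := by
      rw [Finset.erase_ne_self]
      exact hiF
    have hnotcov : ¬ IsCover S (F.erase i) := by
      intro hc
      exact hne (hmin _ (Finset.erase_subset _ _) hc)
    rw [IsCover] at hnotcov
    push_neg at hnotcov
    obtain ⟨a, haS, ha⟩ := hnotcov
    have hai : a i ≠ 0 := by
      obtain ⟨j, hjF, hja⟩ := hcov a haS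
      by_cases hji : j = i
      · rwa [hji] at hja
      · exact absurd (ha j (Finset.mem_erase.mpr ⟨hji, hjF⟩)) hja
    have haF : ∀ j ∈ F, j ≠ i → a j = 0 := by
      intro j hjF hji
      exact ha j (Finset.mem_erase.mpr ⟨hji, hjF⟩)
    set K' := K - Finsupp.single i 1 with hK'
    have hsigK' : m ≤ sig F K' := by
      have hadd := sig_add F (Finsupp.single i 1) K'
      rw [hK', monomial_sub_single hKi] at hadd
      rw [sig_single, if_pos hiF] at hadd
      rw [hK']
      omega
    obtain ⟨D', hD'mem, hD'le⟩ := ih K' hsigK'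
    refine ⟨D' + a, ?_, ?_⟩
    · have hsplit : (monomial (D' + a) (1 : k) : MvPolynomial (Fin (n + 1)) k) =
          monomial D' 1 * monomial a 1 := by
        rw [monomial_mul, one_mul]
      rw [hsplit, pow_succ]
      refine Ideal.mul_mem_mul hD'mem ?_
      rw [hspan]
      exact Ideal.subset_span ⟨a, haS, rfl⟩
    · intro j
      have hD'j := hD'le j
      have hsqa := hsq a haS j
      have hK'j : K' j = K j - (if i = j then 1 else 0) := by
        rw [hK', Finsupp.tsub_apply, Finsupp.single_apply]
      rw [Finsupp.add_apply]
      by_cases hjF : j ∈ F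
      · rw [if_pos hjF] at hD'j ⊢
        by_cases hji : j = i
        · subst hji
          simp only [eq_self_iff_true, if_true] at hK'j
          omega
        · have := haF j hjF hji
          rw [if_neg (Ne.symm hji)] at hK'j
          omega
      · rw [if_neg hjF] at hD'j ⊢
        have hji : j ≠ i := by
          intro hji
          subst hji
          exact hjF hiF
        rw [if_neg (Ne.symm hji)] at hK'j
        omega

lemma exists_loc_witness (hsq : ∀ a ∈ S, ∀ i, a i ≤ 1)
    (hspan : I = Ideal.span
      ((fun a => (monomial a (1 : k) : MvPolynomial (Fin (n + 1)) k)) '' S))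
    {F : Finset (Fin (n + 1))} (hcov : IsCover S F)
    (hmin : ∀ F' ⊆ F, IsCover S F' → F' = F)
    {K : Fin (n + 1) →₀ ℕ} {m : ℕ} (hK : m ≤ sig F K) :
    ∃ s, s ∉ faceId F (k := k) (n := n) ∧ s * monomial K 1 ∈ I ^ m := by
  classical
  set Dm : Fin (n + 1) →₀ ℕ :=
    Finsupp.equivFunOnFinite.symm (fun j => if j ∈ F then 0 else m) with hDm
  have hDmval : ∀ j, Dm j = if j ∈ F then 0 else m := by
    intro j
    rw [hDm]
    rfl
  refine ⟨monomial Dm 1, ?_, ?_⟩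
  · intro hmem
    have := mem_faceId_iff.mp hmem Dm (by
      simp [MvPolynomial.support_monomial])
    have h0 : sig F Dm = 0 := by
      refine Finset.sum_eq_zero (fun j hj => ?_)
      rw [hDmval, if_pos hj]
    omega
  · obtain ⟨D, hDmem, hDle⟩ := pow_witness hsq hspan hcov hmin m K hK
    have hle : D ≤ Dm + K := by
      rw [Finsupp.le_def]
      intro j
      rw [Finsupp.add_apply, hDmval]
      have := hDle j
      omega
    have hsplit : (monomial Dm 1 * monomial K 1 : MvPolynomial (Fin (n + 1)) k) =
        monomial D 1 * monomial (Dm + K - D) 1 := by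
      rw [monomial_mul, monomial_mul, one_mul, add_tsub_cancel_of_le hle]
    rw [hsplit]
    exact Ideal.mul_mem_right _ _ hDmem

end PowWitness

end SPAux

theorem squarefree_symbolic_containment {k : Type*} [Field k] {n : ℕ}
    (I : Ideal (MvPolynomial (Fin (n + 1)) k)) (hsf : IsSquarefreeMonomialIdeal I)
    (e : ℕ) (he : IsBigHeight I e) (m t r : ℕ) (hm : 1 ≤ m) (ht : 1 ≤ t) (hr : 1 ≤ r) :
    symbolicPower I (t * (m + e - 1) - e + r) ≤
      mId k n ^ ((t - 1) * (e - 1) + r - 1) * symbolicPower I m ^ t := by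
  classical
  obtain ⟨S, hsq, hspan⟩ := hsf
  set Nn := t * (m + e - 1) - e + r with hNn
  have hemul : e ≤ t * (m + e - 1) := by
    calc e ≤ m + e - 1 := by omega
    _ ≤ t * (m + e - 1) := Nat.le_mul_of_pos_left _ (by omega)
  have hN1 : 1 ≤ Nn := by omega
  by_cases htop : I = ⊤
  · exfalso
    obtain ⟨P, hP, -⟩ := he.2
    rw [htop] at hP
    haveI : Subsingleton (MvPolynomial (Fin (n + 1)) k ⧸
        (⊤ : Ideal (MvPolynomial (Fin (n + 1)) k))) :=
      Ideal.Quotient.subsingleton_iff.mpr rfl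
    exact not_isAssociatedPrime_of_subsingleton hP
  by_cases hbot : I = ⊥
  · intro f hf
    obtain ⟨P, hPass, -⟩ := he.2
    simp only [symbolicPower] at hf
    rw [Submodule.mem_iInf] at hf
    have h1 := hf ⟨P, hPass⟩
    rw [SPAux.mem_contractedPower_iff] at h1
    obtain ⟨s, hsP, hsf2⟩ := h1
    rw [hbot] at hsf2
    have hpow : (⊥ : Ideal (MvPolynomial (Fin (n + 1)) k)) ^ Nn = ⊥ := by
      rw [← Ideal.zero_eq_bot, zero_pow (by omega : Nn ≠ 0)]
    rw [hpow, Ideal.mem_bot] at hsf2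
    have hs0 : s ≠ 0 := fun h0 => hsP (h0 ▸ P.zero_mem)
    have hf0 : f = 0 := by
      rcases mul_eq_zero.mp hsf2 with h | h
      · exact absurd h hs0
      · exact h
    rw [hf0]
    exact Submodule.zero_mem _
  -- main case
  have hS0 : ∀ a ∈ S, a ≠ 0 := by
    intro a ha h0
    apply htop
    rw [Ideal.eq_top_iff_one]
    have hmem : (monomial a (1 : k) : MvPolynomial (Fin (n + 1)) k) ∈ I := by
      rw [hspan]
      exact Ideal.subset_span ⟨a, ha, rfl⟩
    rwa [h0, monomial_zero', C_1] at hmem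
  have hSne : S.Nonempty := by
    rcases Set.eq_empty_or_nonempty S with h | h
    · exfalso
      apply hbot
      rw [hspan, h, Set.image_empty, Ideal.span_empty]
    · exact h
  set 𝓕 : Finset (Finset (Fin (n + 1))) := Finset.univ.filter
    (fun F => SPAux.faceId F (k := k) (n := n) ∈
      associatedPrimes (MvPolynomial (Fin (n + 1)) k)
        (MvPolynomial (Fin (n + 1)) k ⧸ I)) with h𝓕
  have hmem𝓕 : ∀ F, F ∈ 𝓕 ↔ SPAux.faceId F (k := k) (n := n) ∈
      associatedPrimes (MvPolynomial (Fin (n + 1)) k)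
        (MvPolynomial (Fin (n + 1)) k ⧸ I) := by
    intro F
    rw [h𝓕, Finset.mem_filter]
    simp
  have hstruct : ∀ F ∈ 𝓕, SPAux.IsCover S F ∧ ∀ F' ⊆ F, SPAux.IsCover S F' → F' = F := by
    intro F hF
    obtain ⟨F₂, hPF₂, hcov₂, hmin₂⟩ := SPAux.ass_structure hsq hspan ((hmem𝓕 F).mp hF)
    have hFF₂ : F = F₂ := Finset.Subset.antisymm
      (SPAux.faceId_le_iff.mp (le_of_eq hPF₂))
      (SPAux.faceId_le_iff.mp (le_of_eq hPF₂.symm))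
    rw [hFF₂]
    exact ⟨hcov₂, hmin₂⟩
  have hcard𝓕 : ∀ F ∈ 𝓕, F.card ≤ e := by
    intro F hF
    exact SPAux.card_le_of_height_le (he.1 _ ((hmem𝓕 F).mp hF))
  have h𝓕ne : 𝓕.Nonempty := by
    obtain ⟨P, hPass, -⟩ := he.2
    obtain ⟨F, hPF, hcov, hmin⟩ := SPAux.ass_structure hsq hspan hPass
    exact ⟨F, (hmem𝓕 F).mpr (hPF ▸ hPass)⟩
  have he1 : 1 ≤ e := by
    obtain ⟨F₀, hF₀⟩ := h𝓕ne
    obtain ⟨a, haS⟩ := hSne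
    obtain ⟨i, hiF₀, -⟩ := (hstruct F₀ hF₀).1 a haS
    have h1 : 1 ≤ F₀.card := Finset.card_pos.mpr ⟨i, hiF₀⟩
    exact le_trans h1 (hcard𝓕 F₀ hF₀)
  have h2 : t * (m + e - 1) = t * m + t * (e - 1) := by
    have h2a : m + e - 1 = m + (e - 1) := by omega
    rw [h2a, Nat.mul_add]
  have h3 : t * (e - 1) = (t - 1) * (e - 1) + (e - 1) := by
    cases t with
    | zero => omega
    | succ t' => rw [Nat.succ_sub_one, Nat.succ_mul]
  have hNeq : Nn = t * m + (t - 1) * (e - 1) + (r - 1) := by omega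
  intro f hf
  simp only [symbolicPower] at hf
  rw [Submodule.mem_iInf] at hf
  have hfpow : ∀ F ∈ 𝓕, f ∈ (SPAux.faceId F (k := k) (n := n)) ^ Nn := by
    intro F hF
    have hAss := (hmem𝓕 F).mp hF
    have h1 := hf ⟨SPAux.faceId F, hAss⟩
    rw [SPAux.mem_contractedPower_iff] at h1
    obtain ⟨s, hsP, hsf2⟩ := h1
    have hIle : I ≤ SPAux.faceId F := (SPAux.le_faceId_iff hspan).mpr (hstruct F hF).1
    exact SPAux.faceId_pow_primary hsP (SPAux.pow_le_pow_ideal hIle Nn hsf2)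
  have hkey : ∀ b ∈ f.support, (monomial b (1 : k) : MvPolynomial (Fin (n + 1)) k) ∈
      mId k n ^ ((t - 1) * (e - 1) + r - 1) * symbolicPower I m ^ t := by
    intro b hb
    have hσ : ∀ F ∈ 𝓕, (fun _ : Finset (Fin (n + 1)) => m) F ≠ 0 →
        t * (fun _ : Finset (Fin (n + 1)) => m) F + (t - 1) * (e - 1) + (r - 1) ≤
          ∑ i ∈ F, (fun i => b i) i := by
      intro F hF _
      have h10 := SPAux.mem_faceId_pow_iff.mp (hfpow F hF) b hb
      have h11 : SPAux.sig F b = ∑ i ∈ F, b i := rfl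
      simp only
      omega
    obtain ⟨K, hK1, hK2, -, hK4⟩ := SPAux.MCL_aux e t (r - 1) ht 𝓕 hcard𝓕
      (∑ F ∈ 𝓕, m) (fun _ => m) (fun i => b i) le_rfl hσ
    obtain ⟨F', hF'𝓕, hF'sum, -⟩ := hK4 h𝓕ne
    set KF : Fin (n + 1) →₀ ℕ := Finsupp.equivFunOnFinite.symm K with hKF
    set w : Fin (n + 1) →₀ ℕ :=
      Finsupp.equivFunOnFinite.symm (fun i => b i - t * K i) with hw
    have hKFval : ∀ i, KF i = K i := fun i => rfl
    have hwval : ∀ i, w i = b i - t * K i := fun i => rfl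
    have hdecomp : w + t • KF = b := by
      ext i
      have h12 := hK1 i
      simp only [Finsupp.add_apply, Finsupp.smul_apply, smul_eq_mul]
      rw [hwval i, hKFval i]
      omega
    have hmono : (monomial b (1 : k) : MvPolynomial (Fin (n + 1)) k) =
        monomial w 1 * (monomial KF 1) ^ t := by
      rw [monomial_pow, one_pow, monomial_mul, one_mul, hdecomp]
    rw [hmono]
    refine Ideal.mul_mem_mul ?_ (Ideal.pow_mem_pow ?_ t)
    · have hmId : mId k n = SPAux.faceId Finset.univ := by
        rw [mId, SPAux.faceId]
        congr 1
        rw [Finset.coe_univ, Set.image_univ]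
      rw [hmId]
      apply SPAux.monomial_mem_faceId_pow
      have hsub : SPAux.sig F' w ≤ SPAux.sig Finset.univ w :=
        Finset.sum_le_sum_of_subset (Finset.subset_univ F')
      have hsw : SPAux.sig F' w + ∑ i ∈ F', t * K i = ∑ i ∈ F', b i := by
        rw [show SPAux.sig F' w = ∑ i ∈ F', w i from rfl, ← Finset.sum_add_distrib]
        refine Finset.sum_congr rfl (fun i hi => ?_)
        rw [hwval i]
        have h13 := hK1 i
        omega
      have hKsum : ∑ i ∈ F', t * K i = t * ∑ i ∈ F', K i := by
        rw [Finset.mul_sum]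
      have hbF' : t * m + (t - 1) * (e - 1) + (r - 1) ≤ ∑ i ∈ F', b i :=
        hσ F' hF'𝓕 (show m ≠ 0 by omega)
      have htK : t * ∑ i ∈ F', K i ≤ t * m := Nat.mul_le_mul_left t hF'sum
      omega
    · simp only [symbolicPower]
      rw [Submodule.mem_iInf]
      rintro ⟨P, hPass⟩
      obtain ⟨F, hPF, hFcov, hFmin⟩ := SPAux.ass_structure hsq hspan hPass
      have hF𝓕 : F ∈ 𝓕 := (hmem𝓕 F).mpr (hPF ▸ hPass)
      have hsig : m ≤ SPAux.sig F KF := by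
        have h8 := hK2 F hF𝓕
        have h9 : SPAux.sig F KF = ∑ i ∈ F, K i :=
          Finset.sum_congr rfl (fun i _ => hKFval i)
        omega
      obtain ⟨s, hsF, hsmul⟩ := SPAux.exists_loc_witness hsq hspan hFcov hFmin hsig
      rw [SPAux.mem_contractedPower_iff]
      refine ⟨s, ?_, hsmul⟩
      show s ∉ P
      rw [hPF]
      exact hsF
  have hfs : f = ∑ b ∈ f.support, monomial b (coeff b f) := MvPolynomial.as_sum f
  rw [hfs]
  refine Submodule.sum_mem _ (fun b hb => ?_)
  have h14 : (monomial b (coeff b f) : MvPolynomial (Fin (n + 1)) k) =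
      C (coeff b f) * monomial b 1 := by
    rw [C_mul_monomial, mul_one]
  rw [h14]
  exact Ideal.mul_mem_left _ _ (hkey b hb)
end

section
/- Let 𝒫 = Q + C ⊆ ℝ^m be a polyhedron, where Q is a polytope with finite vertex set V and C is the recession cone of 𝒫, generated as a cone by a finite set of rays. If C ≠ {0}, then every point of 𝒫 can be expressed as the sum of a convex combination of at most m vertices of Q and a conical combination (nonnegative linear combination) of the rays of C. -/
open MvPolynomial Pointwise

section Aux

variable {m : ℕ}

lemma mem_conicalHull_iff_full (S : Finset (Fin m → ℝ)) (x : Fin m → ℝ) :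
    x ∈ conicalHull (S : Set (Fin m → ℝ)) ↔
      ∃ c : (Fin m → ℝ) → ℝ, (∀ y, 0 ≤ c y) ∧ x = ∑ y ∈ S, c y • y := by
  classical
  constructor
  · rintro ⟨t, c, hts, hc, rfl⟩
    refine ⟨fun y => if y ∈ t then c y else 0, fun y => ?_, ?_⟩
    · by_cases h : y ∈ t <;> simp [h, hc y]
    · rw [← Finset.sum_subset (Finset.coe_subset.mp hts)
        (fun y _ hyt => by simp [hyt])]
      exact Finset.sum_congr rfl fun y hy => by simp [hy]
  · rintro ⟨c, hc, rfl⟩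
    exact ⟨S, c, subset_rfl, hc, rfl⟩

lemma conicalHull_zero_mem (S : Finset (Fin m → ℝ)) :
    (0 : Fin m → ℝ) ∈ conicalHull (S : Set (Fin m → ℝ)) :=
  (mem_conicalHull_iff_full S 0).mpr ⟨0, fun _ => le_rfl, by simp⟩

lemma conicalHull_add_mem (S : Finset (Fin m → ℝ)) {x y : Fin m → ℝ}
    (hx : x ∈ conicalHull (S : Set (Fin m → ℝ)))
    (hy : y ∈ conicalHull (S : Set (Fin m → ℝ))) :
    x + y ∈ conicalHull (S : Set (Fin m → ℝ)) := by
  rw [mem_conicalHull_iff_full] at hx hy ⊢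
  obtain ⟨c1, hc1, rfl⟩ := hx
  obtain ⟨c2, hc2, rfl⟩ := hy
  exact ⟨c1 + c2, fun z => add_nonneg (hc1 z) (hc2 z), by
    simp [add_smul, Finset.sum_add_distrib]⟩

lemma conicalHull_smul_mem (S : Finset (Fin m → ℝ)) {a : ℝ} (ha : 0 ≤ a)
    {x : Fin m → ℝ} (hx : x ∈ conicalHull (S : Set (Fin m → ℝ))) :
    a • x ∈ conicalHull (S : Set (Fin m → ℝ)) := by
  rw [mem_conicalHull_iff_full] at hx ⊢
  obtain ⟨c, hc, rfl⟩ := hx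
  exact ⟨fun z => a * c z, fun z => mul_nonneg ha (hc z), by
    simp [Finset.smul_sum, smul_smul]⟩

end Aux

theorem caratheodory_for_polyhedra (m : ℕ) (V S : Finset (Fin m → ℝ))
    (Q C P : Set (Fin m → ℝ))
    (hQ : Q = convexHull ℝ (V : Set (Fin m → ℝ)))
    (hVmin : ∀ W : Finset (Fin m → ℝ), W ⊆ V →
      convexHull ℝ (W : Set (Fin m → ℝ)) = convexHull ℝ (V : Set (Fin m → ℝ)) → W = V)
    (hC : C = conicalHull (S : Set (Fin m → ℝ)))
    (hSmin : ∀ S' : Finset (Fin m → ℝ), S' ⊆ S →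
      conicalHull (S' : Set (Fin m → ℝ)) = conicalHull (S : Set (Fin m → ℝ)) → S' = S)
    (hP : P = Q + C)
    (hrec : C = {a | ∀ b ∈ P, ∀ l : ℝ, 0 ≤ l → b + l • a ∈ P})
    (hCne : C ≠ {0}) :
    ∀ p ∈ P, ∃ T : Finset (Fin m → ℝ), T ⊆ V ∧ T.card ≤ m ∧
      ∃ q ∈ convexHull ℝ (T : Set (Fin m → ℝ)), ∃ c ∈ C, p = q + c := by
  classical
  subst hQ hC hP
  -- a nonzero ray of C
  obtain ⟨r, hrC, hr0⟩ : ∃ r ∈ conicalHull (S : Set (Fin m → ℝ)), r ≠ 0 := by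
    by_contra hcon
    push_neg at hcon
    refine hCne (Set.Subset.antisymm (fun x hx => hcon x hx) ?_)
    rintro x rfl
    exact conicalHull_zero_mem S
  intro p hp
  obtain ⟨q, hq, c, hc, rfl⟩ := Set.mem_add.mp hp
  rw [convexHull_eq_union] at hq
  simp only [Set.mem_iUnion] at hq
  obtain ⟨T₀, hT₀V, hai, hq⟩ := hq
  rcases le_or_gt T₀.card m with hcard | hcard
  · exact ⟨T₀, hT₀V, hcard, q, hq, c, hc, rfl⟩
  -- hard case: T₀.card = m + 1
  have hcard' : T₀.card = m + 1 := by
    have hb := hai.card_le_finrank_succ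
    have hb2 : Module.finrank ℝ
        (vectorSpan ℝ (Set.range ((↑) : ↥T₀ → (Fin m → ℝ)))) ≤ m := by
      have := Submodule.finrank_le
        (vectorSpan ℝ (Set.range ((↑) : ↥T₀ → (Fin m → ℝ))))
      simpa [Module.finrank_fin_fun] using this
    rw [Fintype.card_coe] at hb
    omega
  have htop : affineSpan ℝ (Set.range ((↑) : ↥T₀ → (Fin m → ℝ))) = ⊤ :=
    hai.affineSpan_eq_top_iff_card_eq_finrank_add_one.mpr
      (by simp [Fintype.card_coe, hcard', Module.finrank_fin_fun])
  -- every point is an affine combination of T₀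
  have hrep : ∀ x : Fin m → ℝ, ∃ w : (Fin m → ℝ) → ℝ,
      ∑ y ∈ T₀, w y = 1 ∧ ∑ y ∈ T₀, w y • y = x := by
    intro x
    have hx : x ∈ affineSpan ℝ (Set.range ((↑) : ↥T₀ → (Fin m → ℝ))) := by
      rw [htop]; exact AffineSubspace.mem_top ℝ _ x
    obtain ⟨w, hw1, hwx⟩ := eq_affineCombination_of_mem_affineSpan_of_fintype hx
    rw [Finset.affineCombination_eq_linear_combination _ _ _ hw1] at hwx
    refine ⟨fun y => if h : y ∈ T₀ then w ⟨y, h⟩ else 0, ?_, ?_⟩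
    · rw [← hw1, Finset.univ_eq_attach, ← Finset.sum_attach T₀
        (fun y => if h : y ∈ T₀ then w ⟨y, h⟩ else 0)]
      exact Finset.sum_congr rfl fun y _ => by simp
    · rw [hwx, Finset.univ_eq_attach, ← Finset.sum_attach T₀
        (fun y => (if h : y ∈ T₀ then w ⟨y, h⟩ else 0) • y)]
      exact Finset.sum_congr rfl fun y _ => by simp
  obtain ⟨w0, hw01, hw0x⟩ := hrep 0
  obtain ⟨wr, hwr1, hwrx⟩ := hrep r
  set d : (Fin m → ℝ) → ℝ := fun y => wr y - w0 y with hd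
  have hdsum : ∑ y ∈ T₀, d y = 0 := by
    simp [hd, Finset.sum_sub_distrib, hw01, hwr1]
  have hdr : ∑ y ∈ T₀, d y • y = r := by
    simp [hd, sub_smul, Finset.sum_sub_distrib, hw0x, hwrx]
  -- the weights of q
  rw [Finset.convexHull_eq] at hq
  obtain ⟨w, hw0', hw1, hwq⟩ := hq
  rw [Finset.centerMass_eq_of_sum_1 _ _ hw1] at hwq
  simp only [id] at hwq
  -- some positive direction coefficient
  have hdpos : ∃ y ∈ T₀, 0 < d y := by
    by_contra hcon
    push_neg at hcon
    have hz : ∀ y ∈ T₀, d y = 0 :=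
      (Finset.sum_eq_zero_iff_of_nonpos hcon).mp hdsum
    exact hr0 (by rw [← hdr, Finset.sum_eq_zero fun y hy => by rw [hz y hy, zero_smul]])
  set Pos := T₀.filter (fun y => 0 < d y) with hPos
  have hPosne : Pos.Nonempty := by
    obtain ⟨y, hy, hdy⟩ := hdpos
    exact ⟨y, Finset.mem_filter.mpr ⟨hy, hdy⟩⟩
  obtain ⟨y₀, hy₀Pos, hy₀min⟩ := Finset.exists_min_image Pos (fun y => w y / d y) hPosne
  have hy₀T : y₀ ∈ T₀ := (Finset.mem_filter.mp hy₀Pos).1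
  have hdy₀ : 0 < d y₀ := (Finset.mem_filter.mp hy₀Pos).2
  set t : ℝ := w y₀ / d y₀ with htdef
  have ht0 : 0 ≤ t := div_nonneg (hw0' y₀ hy₀T) hdy₀.le
  set W : (Fin m → ℝ) → ℝ := fun y => w y - t * d y with hW
  have hW0 : ∀ y ∈ T₀, 0 ≤ W y := by
    intro y hy
    by_cases hdy : 0 < d y
    · have hmin := hy₀min y (Finset.mem_filter.mpr ⟨hy, hdy⟩)
      have : t * d y ≤ w y := by
        rw [← le_div_iff₀ hdy]; exact hmin
      simpa [hW] using sub_nonneg.mpr this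
    · push_neg at hdy
      have : t * d y ≤ 0 := mul_nonpos_of_nonneg_of_nonpos ht0 hdy
      have := sub_nonneg.mpr (this.trans (hw0' y hy))
      simpa [hW] using this
  have hWy₀ : W y₀ = 0 := by
    simp [hW, htdef, div_mul_cancel₀ _ hdy₀.ne']
  have hWsum : ∑ y ∈ T₀, W y = 1 := by
    simp [hW, Finset.sum_sub_distrib, hw1, ← Finset.mul_sum, hdsum]
  have hWvec : ∑ y ∈ T₀, W y • y = q - t • r := by
    simp only [hW, sub_smul, mul_smul, Finset.sum_sub_distrib, hwq, ← Finset.smul_sum, hdr]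
  set T := T₀.erase y₀ with hT
  have hTsum : ∑ y ∈ T, W y = 1 := by
    have := Finset.add_sum_erase T₀ W hy₀T
    rw [hWy₀, zero_add] at this
    rw [hT, this, hWsum]
  have hTvec : ∑ y ∈ T, W y • y = q - t • r := by
    have := Finset.add_sum_erase T₀ (fun y => W y • y) hy₀T
    simp only [hWy₀, zero_smul, zero_add] at this
    rw [hT, this, hWvec]
  have hTcard : T.card ≤ m := by
    rw [hT, Finset.card_erase_of_mem hy₀T, hcard']
    omega
  have hTV : T ⊆ V := (Finset.erase_subset _ _).trans hT₀V
  refine ⟨T, hTV, hTcard, q - t • r, ?_, t • r + c, ?_, by abel⟩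
  · rw [Finset.convexHull_eq]
    refine ⟨W, fun y hy => hW0 y (Finset.mem_of_mem_erase hy), hTsum, ?_⟩
    rw [Finset.centerMass_eq_of_sum_1 _ _ hTsum]
    simpa using hTvec
  · exact conicalHull_add_mem S (conicalHull_smul_mem S ht0 hrC) hc
end

section
/- Let R = k[x_0,…,x_n] be a polynomial ring over a field k, let I ⊆ R be a monomial ideal, and let 𝒬 ⊆ ℝ^{n+1} be the symbolic polyhedron of I. Then for every integer m ≥ 1, every exponent vector of a monomial in the m-th symbolic power I^{(m)} lies in the dilate m𝒬, i.e., L(I^{(m)}) ⊆ m𝒬. -/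
open MvPolynomial Pointwise

section AuxProof

open Classical

variable {k : Type*} [Field k] {n : ℕ}

/-- Auxiliary ideal: polynomials each of whose exponent vectors dominates a sum of `m`
elements of `S`. -/
def domIdeal (S : Set (Fin (n + 1) →₀ ℕ)) (m : ℕ) :
    Ideal (MvPolynomial (Fin (n + 1)) k) where
  carrier := {f | ∀ c ∈ f.support, ∃ g : Fin m → (Fin (n + 1) →₀ ℕ),
    (∀ i, g i ∈ S) ∧ ∑ i, g i ≤ c}
  zero_mem' := by simp
  add_mem' := by
    intro f g hf hg c hc
    rcases Finset.mem_union.mp (MvPolynomial.support_add hc) with h | h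
    exacts [hf c h, hg c h]
  smul_mem' := by
    intro r f hf c hc
    rw [smul_eq_mul] at hc
    obtain ⟨d, _, e, he, rfl⟩ := Finset.mem_add.mp (MvPolynomial.support_mul r f hc)
    obtain ⟨g, hg1, hg2⟩ := hf e he
    exact ⟨g, hg1, hg2.trans (le_add_self)⟩

theorem mem_domIdeal {S : Set (Fin (n + 1) →₀ ℕ)} {m : ℕ}
    {f : MvPolynomial (Fin (n + 1)) k} :
    f ∈ domIdeal (k := k) S m ↔ ∀ c ∈ f.support, ∃ g : Fin m → (Fin (n + 1) →₀ ℕ),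
      (∀ i, g i ∈ S) ∧ ∑ i, g i ≤ c := Iff.rfl

theorem span_le_domIdeal_one (S : Set (Fin (n + 1) →₀ ℕ)) :
    Ideal.span ((fun a => (monomial a (1 : k) : MvPolynomial (Fin (n + 1)) k)) '' S) ≤
      domIdeal S 1 := by
  rw [Ideal.span_le]
  rintro _ ⟨a, ha, rfl⟩
  rw [SetLike.mem_coe, mem_domIdeal]
  intro c hc
  rw [MvPolynomial.support_monomial, if_neg (one_ne_zero)] at hc
  rw [Finset.mem_singleton] at hc
  exact ⟨fun _ => a, fun _ => ha, by simp [hc]⟩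

theorem pow_le_domIdeal (S : Set (Fin (n + 1) →₀ ℕ)) (m : ℕ) :
    (Ideal.span ((fun a => (monomial a (1 : k) : MvPolynomial (Fin (n + 1)) k)) '' S)) ^ m ≤
      domIdeal S m := by
  induction m with
  | zero =>
      intro f _
      rw [mem_domIdeal]
      intro c _
      exact ⟨fun i => i.elim0, fun i => i.elim0, by simp⟩
  | succ m ih =>
      rw [pow_succ, Ideal.mul_le]
      intro r hr s hs
      rw [mem_domIdeal]
      intro c hc
      obtain ⟨d, hd, e, he, rfl⟩ := Finset.mem_add.mp (MvPolynomial.support_mul r s hc)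
      obtain ⟨g, hg1, hg2⟩ := ih hr d hd
      obtain ⟨h, hh1, hh2⟩ := span_le_domIdeal_one S hs e he
      refine ⟨Fin.snoc g (h 0), ?_, ?_⟩
      · intro i
        refine Fin.lastCases ?_ ?_ i
        · rw [Fin.snoc_last]; exact hh1 0
        · intro j; rw [Fin.snoc_castSucc]; exact hg1 j
      · rw [Fin.sum_univ_castSucc]
        simp only [Fin.snoc_castSucc, Fin.snoc_last]
        have := hh2
        rw [Fin.sum_univ_one] at this
        exact add_le_add hg2 this

theorem monomial_mem_of_le {J : Ideal (MvPolynomial (Fin (n + 1)) k)}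
    {d e : Fin (n + 1) →₀ ℕ} (h : monomial d (1 : k) ∈ J) (hde : d ≤ e) :
    monomial e (1 : k) ∈ J := by
  have heq : monomial d (1 : k) * monomial (e - d) 1 = monomial e 1 := by
    rw [monomial_mul, one_mul, add_tsub_cancel_of_le hde]
  rw [← heq]
  exact Ideal.mul_mem_right _ _ h

theorem key_decomp {S : Set (Fin (n + 1) →₀ ℕ)}
    {I : Ideal (MvPolynomial (Fin (n + 1)) k)}
    (hI : I = Ideal.span ((fun a => (monomial a (1 : k) : MvPolynomial (Fin (n + 1)) k)) '' S))
    (P : Ideal (MvPolynomial (Fin (n + 1)) k)) (hP : P.IsPrime)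
    {m : ℕ} (hm : 1 ≤ m) {a : Fin (n + 1) →₀ ℕ}
    (ha : monomial a (1 : k) ∈ contractedPower I m P hP) :
    ∃ p : Fin m → (Fin (n + 1) →₀ ℕ),
      (∀ i, monomial (p i) (1 : k) ∈ Qsub I P hP) ∧ ∑ i, p i = a := by
  haveI := hP
  have hmem : algebraMap _ (Localization.AtPrime P) (monomial a (1 : k)) ∈
      Ideal.map (algebraMap _ (Localization.AtPrime P)) (I ^ m) := ha
  rw [IsLocalization.mem_map_algebraMap_iff P.primeCompl (Localization.AtPrime P)] at hmem
  obtain ⟨⟨i, s⟩, hs⟩ := hmem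
  have hcompl : P.primeCompl ≤ nonZeroDivisors (MvPolynomial (Fin (n + 1)) k) := fun x hx =>
    mem_nonZeroDivisors_of_ne_zero (fun h0 => hx (h0 ▸ P.zero_mem))
  have hinj := IsLocalization.injective (Localization.AtPrime P) hcompl
  have heq : monomial a (1 : k) * (s : MvPolynomial (Fin (n + 1)) k) = (i : _) :=
    hinj (by rw [map_mul]; exact hs)
  have hsI : monomial a (1 : k) * (s : MvPolynomial (Fin (n + 1)) k) ∈ I ^ m := by
    rw [heq]; exact i.2
  -- choose a monomial of `s` outside `P`
  have hb : ∃ b ∈ (s : MvPolynomial (Fin (n + 1)) k).support, monomial b (1 : k) ∉ P := by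
    by_contra hcon
    push_neg at hcon
    apply s.2
    have hse : (s : MvPolynomial (Fin (n + 1)) k) =
        ∑ v ∈ (s : MvPolynomial (Fin (n + 1)) k).support,
          monomial v (coeff v (s : MvPolynomial (Fin (n + 1)) k)) := as_sum _
    rw [hse]
    refine Ideal.sum_mem _ fun v hv => ?_
    have hmv : monomial v (coeff v (s : MvPolynomial (Fin (n + 1)) k)) =
        C (coeff v (s : MvPolynomial (Fin (n + 1)) k)) * monomial v 1 := by
      rw [C_mul_monomial, mul_one]
    rw [hmv]
    exact Ideal.mul_mem_left _ _ (hcon v hv)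
  obtain ⟨b, hbs, hbP⟩ := hb
  have habs : a + b ∈ (monomial a (1 : k) * (s : MvPolynomial (Fin (n + 1)) k)).support := by
    rw [MvPolynomial.mem_support_iff, coeff_monomial_mul, one_mul]
    exact MvPolynomial.mem_support_iff.mp hbs
  obtain ⟨g, hgS, hgle⟩ :=
    pow_le_domIdeal S m (by rw [← hI]; exact hsI) (a + b) habs
  -- `b` vanishes on the variables of `P`
  have hbF : ∀ j, X j ∈ P → b j = 0 := by
    intro j hj
    by_contra hb0
    apply hbP
    have h1 : Finsupp.single j 1 ≤ b :=
      Finsupp.single_le_iff.mpr (Nat.one_le_iff_ne_zero.mpr hb0)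
    have hXb : (X j : MvPolynomial (Fin (n + 1)) k) * monomial (b - Finsupp.single j 1) 1 =
        monomial b 1 := by
      show monomial (Finsupp.single j 1) (1 : k) * monomial (b - Finsupp.single j 1) 1 = _
      rw [monomial_mul, one_mul, add_tsub_cancel_of_le h1]
    rw [← hXb]
    exact Ideal.mul_mem_right _ _ hj
  -- restriction to the variables of `P`
  set r : (Fin (n + 1) →₀ ℕ) → (Fin (n + 1) →₀ ℕ) :=
    fun e => e.filter (fun j => X j ∈ P) with hrdef
  have hrapp : ∀ e j, r e j = if X j ∈ P then e j else 0 := by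
    intro e j; rw [hrdef]; exact Finsupp.filter_apply _ _ _
  have hrle : ∀ e, r e ≤ e := by
    intro e
    rw [Finsupp.le_def]
    intro j
    rw [hrapp]
    split <;> simp
  have hsumle : ∑ j, r (g j) ≤ a := by
    rw [Finsupp.le_def]
    intro j
    rw [Finsupp.finset_sum_apply]
    by_cases hj : X j ∈ P
    · have h1 : ∑ i, (r (g i)) j = (∑ i, g i) j := by
        rw [Finsupp.finset_sum_apply]
        exact Finset.sum_congr rfl fun i _ => by rw [hrapp, if_pos hj]
      have h2 : (∑ i, g i) j ≤ a j + b j := by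
        have := Finsupp.le_def.mp hgle j
        rwa [Finsupp.add_apply] at this
      rw [h1]
      rw [hbF j hj, add_zero] at h2
      exact h2
    · have h1 : ∑ i, (r (g i)) j = 0 :=
        Finset.sum_eq_zero fun i _ => by rw [hrapp, if_neg hj]
      rw [h1]; exact Nat.zero_le _
  -- restricted generators lie in `Qsub`
  have hQ : ∀ e, monomial e (1 : k) ∈ I → monomial (r e) (1 : k) ∈ Qsub I P hP := by
    intro e heI
    have hu : (monomial (e - r e) (1 : k)) ∈ P.primeCompl := by
      have hrw : (monomial (e - r e) (1 : k)) =
          (e - r e).prod fun j c => (X j : MvPolynomial (Fin (n + 1)) k) ^ c := by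
        rw [monomial_eq, map_one, one_mul]
      rw [hrw]
      refine Submonoid.prod_mem _ fun j hj => ?_
      have hXj : (X j : MvPolynomial (Fin (n + 1)) k) ∉ P := by
        intro hXP
        have hz : (e - r e) j = 0 := by
          rw [Finsupp.tsub_apply, hrapp, if_pos hXP, Nat.sub_self]
        exact Finsupp.mem_support_iff.mp hj hz
      exact Submonoid.pow_mem _ hXj _
    have hmul : monomial (r e) (1 : k) * monomial (e - r e) 1 = monomial e 1 := by
      rw [monomial_mul, one_mul, add_tsub_cancel_of_le (hrle e)]
    have h1 : algebraMap _ (Localization.AtPrime P) (monomial e (1 : k)) ∈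
        Ideal.map (algebraMap _ (Localization.AtPrime P)) I := Ideal.mem_map_of_mem _ heI
    obtain ⟨u, huu⟩ := IsLocalization.map_units (Localization.AtPrime P)
      (⟨_, hu⟩ : P.primeCompl)
    show algebraMap _ (Localization.AtPrime P) (monomial (r e) (1 : k)) ∈
      Ideal.map (algebraMap _ (Localization.AtPrime P)) I
    have h2 : algebraMap _ (Localization.AtPrime P) (monomial (r e) (1 : k)) =
        algebraMap _ (Localization.AtPrime P) (monomial e (1 : k)) * ↑u⁻¹ := by
      rw [← hmul, map_mul, ← huu, Units.mul_inv_cancel_right]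
    rw [h2]
    exact Ideal.mul_mem_right _ _ h1
  -- assemble
  haveI : NeZero m := ⟨by omega⟩
  refine ⟨fun i => r (g i) + (if i = 0 then a - ∑ j, r (g j) else 0), fun i => ?_, ?_⟩
  · exact monomial_mem_of_le (hQ (g i) (by rw [hI]; exact Ideal.subset_span ⟨g i, hgS i, rfl⟩))
      le_self_add
  · rw [Finset.sum_add_distrib, Finset.sum_ite_eq' Finset.univ (0 : Fin m)
      (fun _ => a - ∑ j, r (g j)), if_pos (Finset.mem_univ _), add_tsub_cancel_of_le hsumle]

end AuxProof

theorem lattice_points_symbolic_power_subset_dilate {k : Type*} [Field k] {n : ℕ}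
    (I : Ideal (MvPolynomial (Fin (n + 1)) k)) (hmon : IsMonomialIdeal I)
    (m : ℕ) (hm : 1 ≤ m) :
    latticePoints (symbolicPower I m) ⊆ (m : ℝ) • symbolicPolyhedron I := by
    classical
  obtain ⟨S, hI⟩ := hmon
  rintro v ⟨a, haI, rfl⟩
  have hm0 : (m : ℝ) ≠ 0 := Nat.cast_ne_zero.mpr (by omega)
  rw [Set.mem_smul_set]
  refine ⟨(m : ℝ)⁻¹ • expVec a, ?_, smul_inv_smul₀ hm0 _⟩
  rw [symbolicPolyhedron, Set.mem_iInter]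
  rintro ⟨P, hPmax⟩
  have hac : monomial a (1 : k) ∈ contractedPower I m P hPmax.1.isPrime := by
    have hle := iInf_le (fun P : {P : Ideal (MvPolynomial (Fin (n + 1)) k) //
        P ∈ associatedPrimes (MvPolynomial (Fin (n + 1)) k)
          ((MvPolynomial (Fin (n + 1)) k) ⧸ I)} =>
        contractedPower I m P.1 P.2.isPrime) ⟨P, hPmax.1⟩
    exact hle haI
  obtain ⟨p, hpQ, hpsum⟩ := key_decomp hI P hPmax.1.isPrime hm hac
  have hsum' : expVec a = ∑ i, expVec (p i) := by
    rw [← hpsum]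
    funext j
    rw [Finset.sum_apply]
    simp only [expVec, Finsupp.finset_sum_apply, Nat.cast_sum]
  have hrw : (m : ℝ)⁻¹ • expVec a = ∑ i, (m : ℝ)⁻¹ • expVec (p i) := by
    rw [hsum', Finset.smul_sum]
  rw [hrw]
  refine (convex_convexHull ℝ _).sum_mem (fun i _ => by positivity) ?_
    (fun i _ => subset_convexHull ℝ _ ⟨p i, hpQ i, rfl⟩)
  rw [Finset.sum_const, Finset.card_univ, Fintype.card_fin, nsmul_eq_mul,
    mul_inv_cancel₀ hm0]
end
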